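/- arXiv:2103.01540 — 3 statements merged into one kernel-verified Lean document; each statement's English description precedes it below -/
import Mathlib

section
/- The star chromatic index of the triangular prism (the Cartesian product K3 □ K2, equivalently the graph on vertices u, v, a, b, c, d with edges uv, ua, ub, vc, vd, ab, bc, cd, da) equals 6. -/
open SimpleGraph

/-- A star edge coloring of `G`: a proper edge coloring (edges sharing a vertex get
distinct colors) such that every path with 4 edges and every cycle with 4 edges
uses at least 3 colors. -/
def IsStarEdgeColoring {V : Type*} (G : SimpleGraph V) (c : Sym2 V → ℕ) : Prop :=
  (∀ e₁ ∈ G.edgeSet, ∀ e₂ ∈ G.edgeSet, e₁ ≠ e₂ → (∃ x, x ∈ e₁ ∧ x ∈ e₂) → c e₁ ≠ c e₂) ∧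
  (∀ v : Fin 5 → V, Function.Injective v →
      (∀ i : Fin 4, G.Adj (v i.castSucc) (v i.succ)) →
      3 ≤ (Finset.univ.image fun i : Fin 4 => c s(v i.castSucc, v i.succ)).card) ∧
  (∀ v : Fin 4 → V, Function.Injective v →
      (∀ i : Fin 4, G.Adj (v i) (v (i + 1))) →
      3 ≤ (Finset.univ.image fun i : Fin 4 => c s(v i, v (i + 1))).card)

/-- The star chromatic index: least `k` such that `G` has a star edge coloring
with colors in `{0, …, k-1}`. -/
noncomputable def starChromaticIndex {V : Type*} (G : SimpleGraph V) : ℕ :=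
  sInf {k | ∃ c : Sym2 V → ℕ, (∀ e ∈ G.edgeSet, c e < k) ∧ IsStarEdgeColoring G c}

/-- A subset of `ZMod n` is an arc (a set of cyclically consecutive elements). -/
def IsArc (n : ℕ) (S : Set (ZMod n)) : Prop :=
  ∃ (a : ZMod n) (m : ℕ), S = (fun j : ℕ => a + (j : ZMod n)) '' {j | j < m}

/-- The cycle graph on the points `σ 0, σ 1, …, σ (n-1)` (in this cyclic order). -/
def cycleOn {V : Type*} (n : ℕ) (σ : ZMod n → V) : SimpleGraph V :=
  SimpleGraph.fromEdgeSet {e | ∃ i : ZMod n, e = s(σ i, σ (i + 1))}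

/-- `G = T ∪ C` is a Halin graph: `T` is a tree with at least one non-leaf vertex,
every vertex of `T` has degree 1 or at least 3, `C` is a cycle whose vertex set is
exactly the leaf set of `T`, the edge set of `G` is the disjoint union of the edge
sets of `T` and `C`, and for every edge `e` of `T` the leaves lying in each
connected component of `T - e` form a contiguous arc of `C`. -/
structure IsHalin {V : Type*} (G T C : SimpleGraph V) : Prop where
  tree : T.IsTree
  degrees : ∀ v, (T.neighborSet v).ncard = 1 ∨ 3 ≤ (T.neighborSet v).ncard
  nonleaf : ∃ v, (T.neighborSet v).ncard ≠ 1
  cyc : ∃ (n : ℕ) (σ : ZMod n → V), 3 ≤ n ∧ Function.Injective σ ∧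
      Set.range σ = {v | (T.neighborSet v).ncard = 1} ∧
      C = cycleOn n σ ∧
      ∀ e ∈ T.edgeSet, ∀ K : (T.deleteEdges {e}).ConnectedComponent,
        IsArc n {i | σ i ∈ K.supp}
  disj : Disjoint T.edgeSet C.edgeSet
  union : G = T ⊔ C

/-- The triangular prism `K₃ □ K₂`, on vertices `u = 0`, `v = 1`, `a = 2`, `b = 3`,
`c = 4`, `d = 5`, with edges `uv, ua, ub, vc, vd, ab, bc, cd, da`. -/
def triangularPrism : SimpleGraph (Fin 6) :=
  SimpleGraph.fromEdgeSet
    {s(0, 1), s(0, 2), s(0, 3), s(1, 4), s(1, 5), s(2, 3), s(3, 4), s(4, 5), s(5, 2)}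


instance : DecidableRel triangularPrism.Adj := fun a b =>
  decidable_of_iff ((s(a,b) = s(0,1) ∨ s(a,b) = s(0,2) ∨ s(a,b) = s(0,3) ∨ s(a,b) = s(1,4)
      ∨ s(a,b) = s(1,5) ∨ s(a,b) = s(2,3) ∨ s(a,b) = s(3,4) ∨ s(a,b) = s(4,5) ∨ s(a,b) = s(5,2)) ∧ a ≠ b)
    (by rw [triangularPrism, SimpleGraph.fromEdgeSet_adj]
        simp [Set.mem_insert_iff, Set.mem_singleton_iff])

/-- An explicit star 6-coloring of the prism. -/
def myc : Sym2 (Fin 6) → ℕ := fun e =>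
  if e = s(0,1) then 0 else if e = s(0,2) then 1 else if e = s(0,3) then 2
  else if e = s(1,4) then 1 else if e = s(1,5) then 2 else if e = s(2,3) then 3
  else if e = s(3,4) then 4 else if e = s(4,5) then 3 else 5

lemma forall_fn5 {α : Type*} (P : (Fin 5 → α) → Prop) :
    (∀ v, P v) ↔ ∀ a b c d e, P ![a,b,c,d,e] := by
  constructor
  · intro h a b c d e; exact h _
  · intro h v
    have hv : v = ![v 0, v 1, v 2, v 3, v 4] := by funext i; fin_cases i <;> rfl
    rw [hv]; exact h _ _ _ _ _

lemma forall_fn4 {α : Type*} (P : (Fin 4 → α) → Prop) :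
    (∀ v, P v) ↔ ∀ a b c d, P ![a,b,c,d] := by
  constructor
  · intro h a b c d; exact h _
  · intro h v
    have hv : v = ![v 0, v 1, v 2, v 3] := by funext i; fin_cases i <;> rfl
    rw [hv]; exact h _ _ _ _

lemma image_fin4 (g : Fin 4 → ℕ) :
    Finset.univ.image g = {g 0, g 1, g 2, g 3} := by
  ext x
  simp only [Finset.mem_image, Finset.mem_univ, true_and, Finset.mem_insert,
    Finset.mem_singleton]
  constructor
  · rintro ⟨i, rfl⟩
    fin_cases i
    · exact Or.inl rfl
    · exact Or.inr (Or.inl rfl)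
    · exact Or.inr (Or.inr (Or.inl rfl))
    · exact Or.inr (Or.inr (Or.inr rfl))
  · rintro (rfl | rfl | rfl | rfl)
    exacts [⟨0, rfl⟩, ⟨1, rfl⟩, ⟨2, rfl⟩, ⟨3, rfl⟩]

lemma two_of_four (g : Fin 4 → ℕ) (h02 : g 0 = g 2) (h13 : g 1 = g 3)
    (h : 3 ≤ (Finset.univ.image g).card) : False := by
  rw [image_fin4] at h
  have hsub : ({g 0, g 1, g 2, g 3} : Finset ℕ) ⊆ {g 0, g 1} := by
    intro x hx
    simp only [Finset.mem_insert, Finset.mem_singleton] at hx ⊢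
    rcases hx with rfl | rfl | rfl | rfl
    · exact Or.inl rfl
    · exact Or.inr rfl
    · exact Or.inl h02.symm
    · exact Or.inr h13.symm
  have h2 := Finset.card_le_card hsub
  have h3 : ({g 0, g 1} : Finset ℕ).card ≤ 2 :=
    (Finset.card_insert_le _ _).trans (by simp)
  omega

lemma cswap (c : Sym2 (Fin 6) → ℕ) (a b : Fin 6) : c s(a,b) = c s(b,a) :=
  congrArg c (Sym2.eq_swap)

lemma swap_lt (u w x : ℕ) (hu : u < 5) (hw : w < 5) (hx : x < 5) :
    Equiv.swap u w x < 5 := by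
  rcases eq_or_ne x u with rfl | h1
  · rw [Equiv.swap_apply_left]; exact hw
  rcases eq_or_ne x w with rfl | h2
  · rw [Equiv.swap_apply_right]; exact hu
  · rw [Equiv.swap_apply_of_ne_of_ne h1 h2]; exact hx

lemma star_comp {V : Type*} (G : SimpleGraph V) (c : Sym2 V → ℕ) (f : ℕ → ℕ)
    (hf : Function.Injective f) (h : IsStarEdgeColoring G c) :
    IsStarEdgeColoring G (fun e => f (c e)) := by
  obtain ⟨h1, h2, h3⟩ := h
  refine ⟨fun e₁ m1 e₂ m2 hne hsh heq => h1 e₁ m1 e₂ m2 hne hsh (hf heq), ?_, ?_⟩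
  · intro v hv ha
    have e2 : (Finset.univ.image fun i : Fin 4 => c s(v i.castSucc, v i.succ)).image f
        = Finset.univ.image (fun i : Fin 4 => f (c s(v i.castSucc, v i.succ))) :=
      Finset.image_image
    have e3 := Finset.card_image_of_injective
      (Finset.univ.image fun i : Fin 4 => c s(v i.castSucc, v i.succ)) hf
    exact le_trans (h2 v hv ha) (e2 ▸ e3).ge
  · intro v hv ha
    have e2 : (Finset.univ.image fun i : Fin 4 => c s(v i, v (i + 1))).image f
        = Finset.univ.image (fun i : Fin 4 => f (c s(v i, v (i + 1)))) :=
      Finset.image_image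
    have e3 := Finset.card_image_of_injective
      (Finset.univ.image fun i : Fin 4 => c s(v i, v (i + 1))) hf
    exact le_trans (h3 v hv ha) (e2 ▸ e3).ge

set_option synthInstance.maxSize 4000 in
set_option synthInstance.maxHeartbeats 2000000 in
set_option maxHeartbeats 4000000 in
set_option maxRecDepth 20000 in
lemma upPath : ∀ a b c d e : Fin 6, triangularPrism.Adj a b → triangularPrism.Adj b c →
    triangularPrism.Adj c d → triangularPrism.Adj d e →
    a ≠ c → a ≠ d → a ≠ e → b ≠ d → b ≠ e → c ≠ e →
    3 ≤ (insert (myc s(a,b)) (insert (myc s(b,c)) (insert (myc s(c,d))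
      ({myc s(d,e)} : Finset ℕ)))).card := by
  decide

set_option synthInstance.maxSize 4000 in
set_option synthInstance.maxHeartbeats 2000000 in
set_option maxHeartbeats 4000000 in
set_option maxRecDepth 20000 in
lemma upCyc : ∀ a b c d : Fin 6, triangularPrism.Adj a b → triangularPrism.Adj b c →
    triangularPrism.Adj c d → triangularPrism.Adj d a →
    a ≠ c → b ≠ d →
    3 ≤ (insert (myc s(a,b)) (insert (myc s(b,c)) (insert (myc s(c,d))
      ({myc s(d,a)} : Finset ℕ)))).card := by
  decide

set_option maxHeartbeats 2000000 in
lemma myc_proper : ∀ e₁ ∈ triangularPrism.edgeSet, ∀ e₂ ∈ triangularPrism.edgeSet,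
    e₁ ≠ e₂ → (∃ x, x ∈ e₁ ∧ x ∈ e₂) → myc e₁ ≠ myc e₂ := by decide

lemma myc_star : IsStarEdgeColoring triangularPrism myc := by
  refine ⟨myc_proper, ?_, ?_⟩
  · rw [forall_fn5]
    intro a b c d e hinj hadj
    rw [image_fin4]
    exact upPath a b c d e (hadj 0) (hadj 1) (hadj 2) (hadj 3)
      (hinj.ne (show (0:Fin 5) ≠ 2 by decide)) (hinj.ne (show (0:Fin 5) ≠ 3 by decide))
      (hinj.ne (show (0:Fin 5) ≠ 4 by decide)) (hinj.ne (show (1:Fin 5) ≠ 3 by decide))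
      (hinj.ne (show (1:Fin 5) ≠ 4 by decide)) (hinj.ne (show (2:Fin 5) ≠ 4 by decide))
  · rw [forall_fn4]
    intro a b c d hinj hadj
    rw [image_fin4]
    exact upCyc a b c d (hadj 0) (hadj 1) (hadj 2) (hadj 3)
      (hinj.ne (show (0:Fin 4) ≠ 2 by decide)) (hinj.ne (show (1:Fin 4) ≠ 3 by decide))

set_option synthInstance.maxSize 10000 in
set_option synthInstance.maxHeartbeats 2000000 in
set_option maxHeartbeats 16000000 in
set_option maxRecDepth 20000 in
lemma noFive : ∀ y3 y4 y5 y6 y7 y8 : Fin 5,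
    ¬ ((0 ≠ (y3 : ℕ)) ∧
      (0 ≠ (y4 : ℕ)) ∧
      ((y3 : ℕ) ≠ (y4 : ℕ)) ∧
      (1 ≠ (y5 : ℕ)) ∧
      (2 ≠ (y5 : ℕ)) ∧
      (¬((y5 : ℕ) = 0 ∧ 2 = (y3 : ℕ))) ∧
      (¬((y5 : ℕ) = 0 ∧ 2 = (y4 : ℕ))) ∧
      (¬((y5 : ℕ) = 0 ∧ 1 = (y3 : ℕ))) ∧
      (¬((y5 : ℕ) = 0 ∧ 1 = (y4 : ℕ))) ∧
      (2 ≠ (y6 : ℕ)) ∧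
      ((y3 : ℕ) ≠ (y6 : ℕ)) ∧
      ((y5 : ℕ) ≠ (y6 : ℕ)) ∧
      (¬(0 = (y6 : ℕ) ∧ (y3 : ℕ) = (y5 : ℕ))) ∧
      (¬(1 = (y6 : ℕ) ∧ (y5 : ℕ) = (y3 : ℕ))) ∧
      (¬(2 = (y3 : ℕ) ∧ (y6 : ℕ) = (y4 : ℕ))) ∧
      (¬(0 = (y5 : ℕ) ∧ 1 = (y6 : ℕ))) ∧
      (¬((y3 : ℕ) = 2 ∧ (y6 : ℕ) = 1)) ∧
      (¬(1 = (y3 : ℕ) ∧ 0 = (y6 : ℕ))) ∧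
      (¬((y5 : ℕ) = (y3 : ℕ) ∧ (y6 : ℕ) = (y4 : ℕ))) ∧
      (¬((y6 : ℕ) = 0 ∧ 2 = (y4 : ℕ))) ∧
      (¬(0 = (y6 : ℕ) ∧ (y3 : ℕ) = 2)) ∧
      ((y3 : ℕ) ≠ (y7 : ℕ)) ∧
      ((y4 : ℕ) ≠ (y7 : ℕ)) ∧
      ((y6 : ℕ) ≠ (y7 : ℕ)) ∧
      (¬(0 = (y7 : ℕ) ∧ (y4 : ℕ) = (y6 : ℕ))) ∧
      (¬(1 = (y6 : ℕ) ∧ (y5 : ℕ) = (y7 : ℕ))) ∧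
      (¬(2 = (y7 : ℕ) ∧ (y6 : ℕ) = (y4 : ℕ))) ∧
      (¬(0 = (y6 : ℕ) ∧ 2 = (y7 : ℕ))) ∧
      (¬((y4 : ℕ) = (y6 : ℕ) ∧ (y7 : ℕ) = (y5 : ℕ))) ∧
      (¬(1 = (y3 : ℕ) ∧ 0 = (y7 : ℕ))) ∧
      (¬(1 = (y4 : ℕ) ∧ 0 = (y7 : ℕ))) ∧
      (¬(1 = (y6 : ℕ) ∧ 2 = (y7 : ℕ))) ∧
      (¬(2 = (y3 : ℕ) ∧ 0 = (y7 : ℕ))) ∧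
      (¬(2 = (y4 : ℕ) ∧ 0 = (y7 : ℕ))) ∧
      (1 ≠ (y8 : ℕ)) ∧
      ((y4 : ℕ) ≠ (y8 : ℕ)) ∧
      ((y5 : ℕ) ≠ (y8 : ℕ)) ∧
      ((y7 : ℕ) ≠ (y8 : ℕ)) ∧
      (¬(0 = (y7 : ℕ) ∧ (y3 : ℕ) = (y8 : ℕ))) ∧
      (¬(0 = (y8 : ℕ) ∧ (y4 : ℕ) = (y5 : ℕ))) ∧
      (¬(1 = (y4 : ℕ) ∧ (y8 : ℕ) = (y3 : ℕ))) ∧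
      (¬(1 = (y7 : ℕ) ∧ (y8 : ℕ) = (y3 : ℕ))) ∧
      (¬(1 = (y7 : ℕ) ∧ (y8 : ℕ) = (y6 : ℕ))) ∧
      (¬(2 = (y8 : ℕ) ∧ (y5 : ℕ) = (y4 : ℕ))) ∧
      (¬(2 = (y8 : ℕ) ∧ (y5 : ℕ) = (y7 : ℕ))) ∧
      (¬(2 = (y7 : ℕ) ∧ (y6 : ℕ) = (y8 : ℕ))) ∧
      (¬(0 = (y8 : ℕ) ∧ 1 = (y7 : ℕ))) ∧
      (¬(0 = (y5 : ℕ) ∧ 2 = (y8 : ℕ))) ∧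
      (¬((y3 : ℕ) = (y5 : ℕ) ∧ (y6 : ℕ) = (y8 : ℕ))) ∧
      (¬((y3 : ℕ) = (y8 : ℕ) ∧ (y7 : ℕ) = (y5 : ℕ))) ∧
      (¬((y4 : ℕ) = 1 ∧ (y8 : ℕ) = 2)) ∧
      (¬((y4 : ℕ) = (y5 : ℕ) ∧ (y8 : ℕ) = (y6 : ℕ))) ∧
      (¬((y8 : ℕ) = 0 ∧ (y4 : ℕ) = 2)) ∧
      (¬((y8 : ℕ) = (y3 : ℕ) ∧ (y4 : ℕ) = (y6 : ℕ))) ∧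
      (¬(2 = (y8 : ℕ) ∧ 1 = (y7 : ℕ))) ∧
      (¬((y5 : ℕ) = (y4 : ℕ) ∧ (y8 : ℕ) = (y3 : ℕ))) ∧
      (¬((y3 : ℕ) = 1 ∧ 0 = (y8 : ℕ))) ∧
      (¬((y6 : ℕ) = 1 ∧ 2 = (y8 : ℕ))) ∧
      (¬(0 = (y8 : ℕ) ∧ (y4 : ℕ) = 1)) ∧
      (¬((y5 : ℕ) = (y7 : ℕ) ∧ (y6 : ℕ) = (y8 : ℕ)))) := by decide

lemma lower5 (c : Sym2 (Fin 6) → ℕ) (hb : ∀ e ∈ triangularPrism.edgeSet, c e < 5)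
    (hstar : IsStarEdgeColoring triangularPrism c) : False := by
  obtain ⟨c', hstar', hb', hv0, hv1, hv2⟩ :
      ∃ c' : Sym2 (Fin 6) → ℕ, IsStarEdgeColoring triangularPrism c' ∧
        (∀ e ∈ triangularPrism.edgeSet, c' e < 5) ∧
        c' s(0,1) = 0 ∧ c' s(0,2) = 1 ∧ c' s(0,3) = 2 := by
    have d01 : c s(0,1) ≠ c s(0,2) :=
      hstar.1 s(0,1) (by decide) s(0,2) (by decide) (by decide) (by decide)
    have d02 : c s(0,1) ≠ c s(0,3) :=
      hstar.1 s(0,1) (by decide) s(0,3) (by decide) (by decide) (by decide)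
    have d12 : c s(0,2) ≠ c s(0,3) :=
      hstar.1 s(0,2) (by decide) s(0,3) (by decide) (by decide) (by decide)
    have hA5 : c s(0,1) < 5 := hb _ (by decide)
    have hB5 : c s(0,2) < 5 := hb _ (by decide)
    have hD5 : c s(0,3) < 5 := hb _ (by decide)
    set A := c s(0,1) with hAdef
    set B := c s(0,2) with hBdef
    set D := c s(0,3) with hDdef
    set B' : ℕ := Equiv.swap 0 A B with hB'def
    set D'' : ℕ := Equiv.swap 1 B' (Equiv.swap 0 A D) with hD''def
    have hB'ne0 : B' ≠ 0 := fun h =>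
      d01 (((Equiv.swap 0 A).injective (h.trans (Equiv.swap_apply_right 0 A).symm)).symm)
    have s2 : Equiv.swap 1 B' 0 = 0 :=
      Equiv.swap_apply_of_ne_of_ne (by omega) (Ne.symm hB'ne0)
    have hD''ne0 : D'' ≠ 0 := fun h =>
      d02 (((Equiv.swap 0 A).injective
        (((Equiv.swap 1 B').injective (h.trans s2.symm)).trans
          (Equiv.swap_apply_right 0 A).symm)).symm)
    have s3 : Equiv.swap 2 D'' 0 = 0 :=
      Equiv.swap_apply_of_ne_of_ne (by omega) (Ne.symm hD''ne0)
    have s4 : Equiv.swap 1 B' B' = 1 := Equiv.swap_apply_right 1 B'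
    have hD''ne1 : D'' ≠ 1 := fun h =>
      d12 (((Equiv.swap 0 A).injective ((Equiv.swap 1 B').injective (h.trans s4.symm))).symm)
    have s5 : Equiv.swap 2 D'' 1 = 1 :=
      Equiv.swap_apply_of_ne_of_ne (by omega) (Ne.symm hD''ne1)
    have hB'5 : B' < 5 := swap_lt _ _ _ (by omega) hA5 hB5
    have hD''5 : D'' < 5 := swap_lt _ _ _ (by omega) hB'5 (swap_lt _ _ _ (by omega) hA5 hD5)
    refine ⟨fun e => Equiv.swap 2 D'' (Equiv.swap 1 B' (Equiv.swap 0 A (c e))), ?_, ?_, ?_, ?_, ?_⟩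
    · exact star_comp _ c _
        ((Equiv.swap 2 D'').injective.comp
          (((Equiv.swap 1 B').injective.comp (Equiv.swap 0 A).injective))) hstar
    · intro e he
      exact swap_lt _ _ _ (by omega) hD''5
        (swap_lt _ _ _ (by omega) hB'5 (swap_lt _ _ _ (by omega) hA5 (hb e he)))
    · show Equiv.swap 2 D'' (Equiv.swap 1 B' (Equiv.swap 0 A A)) = 0
      rw [Equiv.swap_apply_right 0 A, s2, s3]
    · show Equiv.swap 2 D'' (Equiv.swap 1 B' (Equiv.swap 0 A B)) = 1
      rw [← hB'def, s4, s5]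
    · show Equiv.swap 2 D'' (Equiv.swap 1 B' (Equiv.swap 0 A D)) = 2
      rw [← hD''def]
      exact Equiv.swap_apply_right 2 D''
  have hc0 : (0:ℕ) ≠ c' s(1,4) := fun hh => (hstar'.1 s(0,1) (by decide) s(1,4) (by decide) (by decide) (by decide)) (hv0.trans hh)
  have hc1 : (0:ℕ) ≠ c' s(1,5) := fun hh => (hstar'.1 s(0,1) (by decide) s(1,5) (by decide) (by decide) (by decide)) (hv0.trans hh)
  have hc2 : c' s(1,4) ≠ c' s(1,5) := (hstar'.1 s(1,4) (by decide) s(1,5) (by decide) (by decide) (by decide))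
  have hc3 : (1:ℕ) ≠ c' s(2,3) := fun hh => (hstar'.1 s(0,2) (by decide) s(2,3) (by decide) (by decide) (by decide)) (hv1.trans hh)
  have hc4 : (2:ℕ) ≠ c' s(2,3) := fun hh => (hstar'.1 s(0,3) (by decide) s(2,3) (by decide) (by decide) (by decide)) (hv2.trans hh)
  have hc5 : ¬((c' s(2,3) = (0:ℕ)) ∧ ((2:ℕ) = c' s(1,4))) := fun hq => two_of_four (fun i : Fin 4 => c' s((![2, 3, 0, 1, 4] : Fin 5 → Fin 6) i.castSucc, (![2, 3, 0, 1, 4] : Fin 5 → Fin 6) i.succ)) (hq.1.trans hv0.symm) ((cswap c' 3 0).trans (hv2.trans hq.2)) (hstar'.2.1 (![2, 3, 0, 1, 4] : Fin 5 → Fin 6) (by decide) (by decide))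
  have hc6 : ¬((c' s(2,3) = (0:ℕ)) ∧ ((2:ℕ) = c' s(1,5))) := fun hq => two_of_four (fun i : Fin 4 => c' s((![2, 3, 0, 1, 5] : Fin 5 → Fin 6) i.castSucc, (![2, 3, 0, 1, 5] : Fin 5 → Fin 6) i.succ)) (hq.1.trans hv0.symm) ((cswap c' 3 0).trans (hv2.trans hq.2)) (hstar'.2.1 (![2, 3, 0, 1, 5] : Fin 5 → Fin 6) (by decide) (by decide))
  have hc7 : ¬((c' s(2,3) = (0:ℕ)) ∧ ((1:ℕ) = c' s(1,4))) := fun hq => two_of_four (fun i : Fin 4 => c' s((![3, 2, 0, 1, 4] : Fin 5 → Fin 6) i.castSucc, (![3, 2, 0, 1, 4] : Fin 5 → Fin 6) i.succ)) ((cswap c' 3 2).trans (hq.1.trans hv0.symm)) ((cswap c' 2 0).trans (hv1.trans hq.2)) (hstar'.2.1 (![3, 2, 0, 1, 4] : Fin 5 → Fin 6) (by decide) (by decide))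
  have hc8 : ¬((c' s(2,3) = (0:ℕ)) ∧ ((1:ℕ) = c' s(1,5))) := fun hq => two_of_four (fun i : Fin 4 => c' s((![3, 2, 0, 1, 5] : Fin 5 → Fin 6) i.castSucc, (![3, 2, 0, 1, 5] : Fin 5 → Fin 6) i.succ)) ((cswap c' 3 2).trans (hq.1.trans hv0.symm)) ((cswap c' 2 0).trans (hv1.trans hq.2)) (hstar'.2.1 (![3, 2, 0, 1, 5] : Fin 5 → Fin 6) (by decide) (by decide))
  have hc9 : (2:ℕ) ≠ c' s(3,4) := fun hh => (hstar'.1 s(0,3) (by decide) s(3,4) (by decide) (by decide) (by decide)) (hv2.trans hh)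
  have hc10 : c' s(1,4) ≠ c' s(3,4) := (hstar'.1 s(1,4) (by decide) s(3,4) (by decide) (by decide) (by decide))
  have hc11 : c' s(2,3) ≠ c' s(3,4) := (hstar'.1 s(2,3) (by decide) s(3,4) (by decide) (by decide) (by decide))
  have hc12 : ¬(((0:ℕ) = c' s(3,4)) ∧ (c' s(1,4) = c' s(2,3))) := fun hq => two_of_four (fun i : Fin 4 => c' s((![0, 1, 4, 3, 2] : Fin 5 → Fin 6) i.castSucc, (![0, 1, 4, 3, 2] : Fin 5 → Fin 6) i.succ)) (hv0.trans (hq.1.trans (cswap c' 4 3).symm)) (hq.2.trans (cswap c' 3 2).symm) (hstar'.2.1 (![0, 1, 4, 3, 2] : Fin 5 → Fin 6) (by decide) (by decide))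
  have hc13 : ¬(((1:ℕ) = c' s(3,4)) ∧ (c' s(2,3) = c' s(1,4))) := fun hq => two_of_four (fun i : Fin 4 => c' s((![0, 2, 3, 4, 1] : Fin 5 → Fin 6) i.castSucc, (![0, 2, 3, 4, 1] : Fin 5 → Fin 6) i.succ)) (hv1.trans hq.1) (hq.2.trans (cswap c' 4 1).symm) (hstar'.2.1 (![0, 2, 3, 4, 1] : Fin 5 → Fin 6) (by decide) (by decide))
  have hc14 : ¬(((2:ℕ) = c' s(1,4)) ∧ (c' s(3,4) = c' s(1,5))) := fun hq => two_of_four (fun i : Fin 4 => c' s((![0, 3, 4, 1, 5] : Fin 5 → Fin 6) i.castSucc, (![0, 3, 4, 1, 5] : Fin 5 → Fin 6) i.succ)) (hv2.trans (hq.1.trans (cswap c' 4 1).symm)) hq.2 (hstar'.2.1 (![0, 3, 4, 1, 5] : Fin 5 → Fin 6) (by decide) (by decide))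
  have hc15 : ¬(((0:ℕ) = c' s(2,3)) ∧ ((1:ℕ) = c' s(3,4))) := fun hq => two_of_four (fun i : Fin 4 => c' s((![1, 0, 2, 3, 4] : Fin 5 → Fin 6) i.castSucc, (![1, 0, 2, 3, 4] : Fin 5 → Fin 6) i.succ)) ((cswap c' 1 0).trans (hv0.trans hq.1)) (hv1.trans hq.2) (hstar'.2.1 (![1, 0, 2, 3, 4] : Fin 5 → Fin 6) (by decide) (by decide))
  have hc16 : ¬((c' s(1,4) = (2:ℕ)) ∧ (c' s(3,4) = (1:ℕ))) := fun hq => two_of_four (fun i : Fin 4 => c' s((![1, 4, 3, 0, 2] : Fin 5 → Fin 6) i.castSucc, (![1, 4, 3, 0, 2] : Fin 5 → Fin 6) i.succ)) (hq.1.trans (hv2.symm.trans (cswap c' 3 0).symm)) ((cswap c' 4 3).trans (hq.2.trans hv1.symm)) (hstar'.2.1 (![1, 4, 3, 0, 2] : Fin 5 → Fin 6) (by decide) (by decide))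
  have hc17 : ¬(((1:ℕ) = c' s(1,4)) ∧ ((0:ℕ) = c' s(3,4))) := fun hq => two_of_four (fun i : Fin 4 => c' s((![2, 0, 1, 4, 3] : Fin 5 → Fin 6) i.castSucc, (![2, 0, 1, 4, 3] : Fin 5 → Fin 6) i.succ)) ((cswap c' 2 0).trans (hv1.trans hq.1)) (hv0.trans (hq.2.trans (cswap c' 4 3).symm)) (hstar'.2.1 (![2, 0, 1, 4, 3] : Fin 5 → Fin 6) (by decide) (by decide))
  have hc18 : ¬((c' s(2,3) = c' s(1,4)) ∧ (c' s(3,4) = c' s(1,5))) := fun hq => two_of_four (fun i : Fin 4 => c' s((![2, 3, 4, 1, 5] : Fin 5 → Fin 6) i.castSucc, (![2, 3, 4, 1, 5] : Fin 5 → Fin 6) i.succ)) (hq.1.trans (cswap c' 4 1).symm) hq.2 (hstar'.2.1 (![2, 3, 4, 1, 5] : Fin 5 → Fin 6) (by decide) (by decide))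
  have hc19 : ¬((c' s(3,4) = (0:ℕ)) ∧ ((2:ℕ) = c' s(1,5))) := fun hq => two_of_four (fun i : Fin 4 => c' s((![4, 3, 0, 1, 5] : Fin 5 → Fin 6) i.castSucc, (![4, 3, 0, 1, 5] : Fin 5 → Fin 6) i.succ)) ((cswap c' 4 3).trans (hq.1.trans hv0.symm)) ((cswap c' 3 0).trans (hv2.trans hq.2)) (hstar'.2.1 (![4, 3, 0, 1, 5] : Fin 5 → Fin 6) (by decide) (by decide))
  have hc20 : ¬(((0:ℕ) = c' s(3,4)) ∧ (c' s(1,4) = (2:ℕ))) := fun hq => two_of_four (fun i : Fin 4 => c' s((![0, 1, 4, 3] : Fin 4 → Fin 6) i, (![0, 1, 4, 3] : Fin 4 → Fin 6) (i + 1))) (hv0.trans (hq.1.trans (cswap c' 4 3).symm)) (hq.2.trans (hv2.symm.trans (cswap c' 3 0).symm)) (hstar'.2.2 (![0, 1, 4, 3] : Fin 4 → Fin 6) (by decide) (by decide))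
  have hc21 : c' s(1,4) ≠ c' s(4,5) := (hstar'.1 s(1,4) (by decide) s(4,5) (by decide) (by decide) (by decide))
  have hc22 : c' s(1,5) ≠ c' s(4,5) := (hstar'.1 s(1,5) (by decide) s(4,5) (by decide) (by decide) (by decide))
  have hc23 : c' s(3,4) ≠ c' s(4,5) := (hstar'.1 s(3,4) (by decide) s(4,5) (by decide) (by decide) (by decide))
  have hc24 : ¬(((0:ℕ) = c' s(4,5)) ∧ (c' s(1,5) = c' s(3,4))) := fun hq => two_of_four (fun i : Fin 4 => c' s((![0, 1, 5, 4, 3] : Fin 5 → Fin 6) i.castSucc, (![0, 1, 5, 4, 3] : Fin 5 → Fin 6) i.succ)) (hv0.trans (hq.1.trans (cswap c' 5 4).symm)) (hq.2.trans (cswap c' 4 3).symm) (hstar'.2.1 (![0, 1, 5, 4, 3] : Fin 5 → Fin 6) (by decide) (by decide))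
  have hc25 : ¬(((1:ℕ) = c' s(3,4)) ∧ (c' s(2,3) = c' s(4,5))) := fun hq => two_of_four (fun i : Fin 4 => c' s((![0, 2, 3, 4, 5] : Fin 5 → Fin 6) i.castSucc, (![0, 2, 3, 4, 5] : Fin 5 → Fin 6) i.succ)) (hv1.trans hq.1) hq.2 (hstar'.2.1 (![0, 2, 3, 4, 5] : Fin 5 → Fin 6) (by decide) (by decide))
  have hc26 : ¬(((2:ℕ) = c' s(4,5)) ∧ (c' s(3,4) = c' s(1,5))) := fun hq => two_of_four (fun i : Fin 4 => c' s((![0, 3, 4, 5, 1] : Fin 5 → Fin 6) i.castSucc, (![0, 3, 4, 5, 1] : Fin 5 → Fin 6) i.succ)) (hv2.trans hq.1) (hq.2.trans (cswap c' 5 1).symm) (hstar'.2.1 (![0, 3, 4, 5, 1] : Fin 5 → Fin 6) (by decide) (by decide))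
  have hc27 : ¬(((0:ℕ) = c' s(3,4)) ∧ ((2:ℕ) = c' s(4,5))) := fun hq => two_of_four (fun i : Fin 4 => c' s((![1, 0, 3, 4, 5] : Fin 5 → Fin 6) i.castSucc, (![1, 0, 3, 4, 5] : Fin 5 → Fin 6) i.succ)) ((cswap c' 1 0).trans (hv0.trans hq.1)) (hv2.trans hq.2) (hstar'.2.1 (![1, 0, 3, 4, 5] : Fin 5 → Fin 6) (by decide) (by decide))
  have hc28 : ¬((c' s(1,5) = c' s(3,4)) ∧ (c' s(4,5) = c' s(2,3))) := fun hq => two_of_four (fun i : Fin 4 => c' s((![1, 5, 4, 3, 2] : Fin 5 → Fin 6) i.castSucc, (![1, 5, 4, 3, 2] : Fin 5 → Fin 6) i.succ)) (hq.1.trans (cswap c' 4 3).symm) ((cswap c' 5 4).trans (hq.2.trans (cswap c' 3 2).symm)) (hstar'.2.1 (![1, 5, 4, 3, 2] : Fin 5 → Fin 6) (by decide) (by decide))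
  have hc29 : ¬(((1:ℕ) = c' s(1,4)) ∧ ((0:ℕ) = c' s(4,5))) := fun hq => two_of_four (fun i : Fin 4 => c' s((![2, 0, 1, 4, 5] : Fin 5 → Fin 6) i.castSucc, (![2, 0, 1, 4, 5] : Fin 5 → Fin 6) i.succ)) ((cswap c' 2 0).trans (hv1.trans hq.1)) (hv0.trans hq.2) (hstar'.2.1 (![2, 0, 1, 4, 5] : Fin 5 → Fin 6) (by decide) (by decide))
  have hc30 : ¬(((1:ℕ) = c' s(1,5)) ∧ ((0:ℕ) = c' s(4,5))) := fun hq => two_of_four (fun i : Fin 4 => c' s((![2, 0, 1, 5, 4] : Fin 5 → Fin 6) i.castSucc, (![2, 0, 1, 5, 4] : Fin 5 → Fin 6) i.succ)) ((cswap c' 2 0).trans (hv1.trans hq.1)) (hv0.trans (hq.2.trans (cswap c' 5 4).symm)) (hstar'.2.1 (![2, 0, 1, 5, 4] : Fin 5 → Fin 6) (by decide) (by decide))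
  have hc31 : ¬(((1:ℕ) = c' s(3,4)) ∧ ((2:ℕ) = c' s(4,5))) := fun hq => two_of_four (fun i : Fin 4 => c' s((![2, 0, 3, 4, 5] : Fin 5 → Fin 6) i.castSucc, (![2, 0, 3, 4, 5] : Fin 5 → Fin 6) i.succ)) ((cswap c' 2 0).trans (hv1.trans hq.1)) (hv2.trans hq.2) (hstar'.2.1 (![2, 0, 3, 4, 5] : Fin 5 → Fin 6) (by decide) (by decide))
  have hc32 : ¬(((2:ℕ) = c' s(1,4)) ∧ ((0:ℕ) = c' s(4,5))) := fun hq => two_of_four (fun i : Fin 4 => c' s((![3, 0, 1, 4, 5] : Fin 5 → Fin 6) i.castSucc, (![3, 0, 1, 4, 5] : Fin 5 → Fin 6) i.succ)) ((cswap c' 3 0).trans (hv2.trans hq.1)) (hv0.trans hq.2) (hstar'.2.1 (![3, 0, 1, 4, 5] : Fin 5 → Fin 6) (by decide) (by decide))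
  have hc33 : ¬(((2:ℕ) = c' s(1,5)) ∧ ((0:ℕ) = c' s(4,5))) := fun hq => two_of_four (fun i : Fin 4 => c' s((![3, 0, 1, 5, 4] : Fin 5 → Fin 6) i.castSucc, (![3, 0, 1, 5, 4] : Fin 5 → Fin 6) i.succ)) ((cswap c' 3 0).trans (hv2.trans hq.1)) (hv0.trans (hq.2.trans (cswap c' 5 4).symm)) (hstar'.2.1 (![3, 0, 1, 5, 4] : Fin 5 → Fin 6) (by decide) (by decide))
  have hc34 : (1:ℕ) ≠ c' s(5,2) := fun hh => (hstar'.1 s(0,2) (by decide) s(5,2) (by decide) (by decide) (by decide)) (hv1.trans hh)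
  have hc35 : c' s(1,5) ≠ c' s(5,2) := (hstar'.1 s(1,5) (by decide) s(5,2) (by decide) (by decide) (by decide))
  have hc36 : c' s(2,3) ≠ c' s(5,2) := (hstar'.1 s(2,3) (by decide) s(5,2) (by decide) (by decide) (by decide))
  have hc37 : c' s(4,5) ≠ c' s(5,2) := (hstar'.1 s(4,5) (by decide) s(5,2) (by decide) (by decide) (by decide))
  have hc38 : ¬(((0:ℕ) = c' s(4,5)) ∧ (c' s(1,4) = c' s(5,2))) := fun hq => two_of_four (fun i : Fin 4 => c' s((![0, 1, 4, 5, 2] : Fin 5 → Fin 6) i.castSucc, (![0, 1, 4, 5, 2] : Fin 5 → Fin 6) i.succ)) (hv0.trans hq.1) hq.2 (hstar'.2.1 (![0, 1, 4, 5, 2] : Fin 5 → Fin 6) (by decide) (by decide))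
  have hc39 : ¬(((0:ℕ) = c' s(5,2)) ∧ (c' s(1,5) = c' s(2,3))) := fun hq => two_of_four (fun i : Fin 4 => c' s((![0, 1, 5, 2, 3] : Fin 5 → Fin 6) i.castSucc, (![0, 1, 5, 2, 3] : Fin 5 → Fin 6) i.succ)) (hv0.trans hq.1) hq.2 (hstar'.2.1 (![0, 1, 5, 2, 3] : Fin 5 → Fin 6) (by decide) (by decide))
  have hc40 : ¬(((1:ℕ) = c' s(1,5)) ∧ (c' s(5,2) = c' s(1,4))) := fun hq => two_of_four (fun i : Fin 4 => c' s((![0, 2, 5, 1, 4] : Fin 5 → Fin 6) i.castSucc, (![0, 2, 5, 1, 4] : Fin 5 → Fin 6) i.succ)) (hv1.trans (hq.1.trans (cswap c' 5 1).symm)) ((cswap c' 2 5).trans hq.2) (hstar'.2.1 (![0, 2, 5, 1, 4] : Fin 5 → Fin 6) (by decide) (by decide))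
  have hc41 : ¬(((1:ℕ) = c' s(4,5)) ∧ (c' s(5,2) = c' s(1,4))) := fun hq => two_of_four (fun i : Fin 4 => c' s((![0, 2, 5, 4, 1] : Fin 5 → Fin 6) i.castSucc, (![0, 2, 5, 4, 1] : Fin 5 → Fin 6) i.succ)) (hv1.trans (hq.1.trans (cswap c' 5 4).symm)) ((cswap c' 2 5).trans (hq.2.trans (cswap c' 4 1).symm)) (hstar'.2.1 (![0, 2, 5, 4, 1] : Fin 5 → Fin 6) (by decide) (by decide))
  have hc42 : ¬(((1:ℕ) = c' s(4,5)) ∧ (c' s(5,2) = c' s(3,4))) := fun hq => two_of_four (fun i : Fin 4 => c' s((![0, 2, 5, 4, 3] : Fin 5 → Fin 6) i.castSucc, (![0, 2, 5, 4, 3] : Fin 5 → Fin 6) i.succ)) (hv1.trans (hq.1.trans (cswap c' 5 4).symm)) ((cswap c' 2 5).trans (hq.2.trans (cswap c' 4 3).symm)) (hstar'.2.1 (![0, 2, 5, 4, 3] : Fin 5 → Fin 6) (by decide) (by decide))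
  have hc43 : ¬(((2:ℕ) = c' s(5,2)) ∧ (c' s(2,3) = c' s(1,5))) := fun hq => two_of_four (fun i : Fin 4 => c' s((![0, 3, 2, 5, 1] : Fin 5 → Fin 6) i.castSucc, (![0, 3, 2, 5, 1] : Fin 5 → Fin 6) i.succ)) (hv2.trans (hq.1.trans (cswap c' 2 5).symm)) ((cswap c' 3 2).trans (hq.2.trans (cswap c' 5 1).symm)) (hstar'.2.1 (![0, 3, 2, 5, 1] : Fin 5 → Fin 6) (by decide) (by decide))
  have hc44 : ¬(((2:ℕ) = c' s(5,2)) ∧ (c' s(2,3) = c' s(4,5))) := fun hq => two_of_four (fun i : Fin 4 => c' s((![0, 3, 2, 5, 4] : Fin 5 → Fin 6) i.castSucc, (![0, 3, 2, 5, 4] : Fin 5 → Fin 6) i.succ)) (hv2.trans (hq.1.trans (cswap c' 2 5).symm)) ((cswap c' 3 2).trans (hq.2.trans (cswap c' 5 4).symm)) (hstar'.2.1 (![0, 3, 2, 5, 4] : Fin 5 → Fin 6) (by decide) (by decide))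
  have hc45 : ¬(((2:ℕ) = c' s(4,5)) ∧ (c' s(3,4) = c' s(5,2))) := fun hq => two_of_four (fun i : Fin 4 => c' s((![0, 3, 4, 5, 2] : Fin 5 → Fin 6) i.castSucc, (![0, 3, 4, 5, 2] : Fin 5 → Fin 6) i.succ)) (hv2.trans hq.1) hq.2 (hstar'.2.1 (![0, 3, 4, 5, 2] : Fin 5 → Fin 6) (by decide) (by decide))
  have hc46 : ¬(((0:ℕ) = c' s(5,2)) ∧ ((1:ℕ) = c' s(4,5))) := fun hq => two_of_four (fun i : Fin 4 => c' s((![1, 0, 2, 5, 4] : Fin 5 → Fin 6) i.castSucc, (![1, 0, 2, 5, 4] : Fin 5 → Fin 6) i.succ)) ((cswap c' 1 0).trans (hv0.trans (hq.1.trans (cswap c' 2 5).symm))) (hv1.trans (hq.2.trans (cswap c' 5 4).symm)) (hstar'.2.1 (![1, 0, 2, 5, 4] : Fin 5 → Fin 6) (by decide) (by decide))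
  have hc47 : ¬(((0:ℕ) = c' s(2,3)) ∧ ((2:ℕ) = c' s(5,2))) := fun hq => two_of_four (fun i : Fin 4 => c' s((![1, 0, 3, 2, 5] : Fin 5 → Fin 6) i.castSucc, (![1, 0, 3, 2, 5] : Fin 5 → Fin 6) i.succ)) ((cswap c' 1 0).trans (hv0.trans (hq.1.trans (cswap c' 3 2).symm))) (hv2.trans (hq.2.trans (cswap c' 2 5).symm)) (hstar'.2.1 (![1, 0, 3, 2, 5] : Fin 5 → Fin 6) (by decide) (by decide))
  have hc48 : ¬((c' s(1,4) = c' s(2,3)) ∧ (c' s(3,4) = c' s(5,2))) := fun hq => two_of_four (fun i : Fin 4 => c' s((![1, 4, 3, 2, 5] : Fin 5 → Fin 6) i.castSucc, (![1, 4, 3, 2, 5] : Fin 5 → Fin 6) i.succ)) (hq.1.trans (cswap c' 3 2).symm) ((cswap c' 4 3).trans (hq.2.trans (cswap c' 2 5).symm)) (hstar'.2.1 (![1, 4, 3, 2, 5] : Fin 5 → Fin 6) (by decide) (by decide))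
  have hc49 : ¬((c' s(1,4) = c' s(5,2)) ∧ (c' s(4,5) = c' s(2,3))) := fun hq => two_of_four (fun i : Fin 4 => c' s((![1, 4, 5, 2, 3] : Fin 5 → Fin 6) i.castSucc, (![1, 4, 5, 2, 3] : Fin 5 → Fin 6) i.succ)) hq.1 hq.2 (hstar'.2.1 (![1, 4, 5, 2, 3] : Fin 5 → Fin 6) (by decide) (by decide))
  have hc50 : ¬((c' s(1,5) = (1:ℕ)) ∧ (c' s(5,2) = (2:ℕ))) := fun hq => two_of_four (fun i : Fin 4 => c' s((![1, 5, 2, 0, 3] : Fin 5 → Fin 6) i.castSucc, (![1, 5, 2, 0, 3] : Fin 5 → Fin 6) i.succ)) (hq.1.trans (hv1.symm.trans (cswap c' 2 0).symm)) (hq.2.trans hv2.symm) (hstar'.2.1 (![1, 5, 2, 0, 3] : Fin 5 → Fin 6) (by decide) (by decide))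
  have hc51 : ¬((c' s(1,5) = c' s(2,3)) ∧ (c' s(5,2) = c' s(3,4))) := fun hq => two_of_four (fun i : Fin 4 => c' s((![1, 5, 2, 3, 4] : Fin 5 → Fin 6) i.castSucc, (![1, 5, 2, 3, 4] : Fin 5 → Fin 6) i.succ)) hq.1 hq.2 (hstar'.2.1 (![1, 5, 2, 3, 4] : Fin 5 → Fin 6) (by decide) (by decide))
  have hc52 : ¬((c' s(5,2) = (0:ℕ)) ∧ (c' s(1,5) = (2:ℕ))) := fun hq => two_of_four (fun i : Fin 4 => c' s((![2, 5, 1, 0, 3] : Fin 5 → Fin 6) i.castSucc, (![2, 5, 1, 0, 3] : Fin 5 → Fin 6) i.succ)) ((cswap c' 2 5).trans (hq.1.trans (hv0.symm.trans (cswap c' 1 0).symm))) ((cswap c' 5 1).trans (hq.2.trans hv2.symm)) (hstar'.2.1 (![2, 5, 1, 0, 3] : Fin 5 → Fin 6) (by decide) (by decide))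
  have hc53 : ¬((c' s(5,2) = c' s(1,4)) ∧ (c' s(1,5) = c' s(3,4))) := fun hq => two_of_four (fun i : Fin 4 => c' s((![2, 5, 1, 4, 3] : Fin 5 → Fin 6) i.castSucc, (![2, 5, 1, 4, 3] : Fin 5 → Fin 6) i.succ)) ((cswap c' 2 5).trans hq.1) ((cswap c' 5 1).trans (hq.2.trans (cswap c' 4 3).symm)) (hstar'.2.1 (![2, 5, 1, 4, 3] : Fin 5 → Fin 6) (by decide) (by decide))
  have hc54 : ¬(((2:ℕ) = c' s(5,2)) ∧ ((1:ℕ) = c' s(4,5))) := fun hq => two_of_four (fun i : Fin 4 => c' s((![3, 0, 2, 5, 4] : Fin 5 → Fin 6) i.castSucc, (![3, 0, 2, 5, 4] : Fin 5 → Fin 6) i.succ)) ((cswap c' 3 0).trans (hv2.trans (hq.1.trans (cswap c' 2 5).symm))) (hv1.trans (hq.2.trans (cswap c' 5 4).symm)) (hstar'.2.1 (![3, 0, 2, 5, 4] : Fin 5 → Fin 6) (by decide) (by decide))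
  have hc55 : ¬((c' s(2,3) = c' s(1,5)) ∧ (c' s(5,2) = c' s(1,4))) := fun hq => two_of_four (fun i : Fin 4 => c' s((![3, 2, 5, 1, 4] : Fin 5 → Fin 6) i.castSucc, (![3, 2, 5, 1, 4] : Fin 5 → Fin 6) i.succ)) ((cswap c' 3 2).trans (hq.1.trans (cswap c' 5 1).symm)) ((cswap c' 2 5).trans hq.2) (hstar'.2.1 (![3, 2, 5, 1, 4] : Fin 5 → Fin 6) (by decide) (by decide))
  have hc56 : ¬((c' s(1,4) = (1:ℕ)) ∧ ((0:ℕ) = c' s(5,2))) := fun hq => two_of_four (fun i : Fin 4 => c' s((![4, 1, 0, 2, 5] : Fin 5 → Fin 6) i.castSucc, (![4, 1, 0, 2, 5] : Fin 5 → Fin 6) i.succ)) ((cswap c' 4 1).trans (hq.1.trans hv1.symm)) ((cswap c' 1 0).trans (hv0.trans (hq.2.trans (cswap c' 2 5).symm))) (hstar'.2.1 (![4, 1, 0, 2, 5] : Fin 5 → Fin 6) (by decide) (by decide))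
  have hc57 : ¬((c' s(3,4) = (1:ℕ)) ∧ ((2:ℕ) = c' s(5,2))) := fun hq => two_of_four (fun i : Fin 4 => c' s((![4, 3, 0, 2, 5] : Fin 5 → Fin 6) i.castSucc, (![4, 3, 0, 2, 5] : Fin 5 → Fin 6) i.succ)) ((cswap c' 4 3).trans (hq.1.trans hv1.symm)) ((cswap c' 3 0).trans (hv2.trans (hq.2.trans (cswap c' 2 5).symm))) (hstar'.2.1 (![4, 3, 0, 2, 5] : Fin 5 → Fin 6) (by decide) (by decide))
  have hc58 : ¬(((0:ℕ) = c' s(5,2)) ∧ (c' s(1,5) = (1:ℕ))) := fun hq => two_of_four (fun i : Fin 4 => c' s((![0, 1, 5, 2] : Fin 4 → Fin 6) i, (![0, 1, 5, 2] : Fin 4 → Fin 6) (i + 1))) (hv0.trans hq.1) (hq.2.trans (hv1.symm.trans (cswap c' 2 0).symm)) (hstar'.2.2 (![0, 1, 5, 2] : Fin 4 → Fin 6) (by decide) (by decide))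
  have hc59 : ¬((c' s(2,3) = c' s(4,5)) ∧ (c' s(3,4) = c' s(5,2))) := fun hq => two_of_four (fun i : Fin 4 => c' s((![2, 3, 4, 5] : Fin 4 → Fin 6) i, (![2, 3, 4, 5] : Fin 4 → Fin 6) (i + 1))) hq.1 hq.2 (hstar'.2.2 (![2, 3, 4, 5] : Fin 4 → Fin 6) (by decide) (by decide))
  exact noFive ⟨c' s(1,4), hb' _ (by decide)⟩ ⟨c' s(1,5), hb' _ (by decide)⟩
    ⟨c' s(2,3), hb' _ (by decide)⟩ ⟨c' s(3,4), hb' _ (by decide)⟩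
    ⟨c' s(4,5), hb' _ (by decide)⟩ ⟨c' s(5,2), hb' _ (by decide)⟩
    ⟨hc0, hc1, hc2, hc3, hc4, hc5, hc6, hc7, hc8, hc9, hc10, hc11, hc12, hc13, hc14, hc15, hc16, hc17, hc18, hc19, hc20, hc21, hc22, hc23, hc24, hc25, hc26, hc27, hc28, hc29, hc30, hc31, hc32, hc33, hc34, hc35, hc36, hc37, hc38, hc39, hc40, hc41, hc42, hc43, hc44, hc45, hc46, hc47, hc48, hc49, hc50, hc51, hc52, hc53, hc54, hc55, hc56, hc57, hc58, hc59⟩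


/-- The star chromatic index of the triangular prism equals 6. -/
theorem star_chromatic_index_triangular_prism :
    starChromaticIndex triangularPrism = 6 := by
  have h6 : 6 ∈ {k | ∃ c : Sym2 (Fin 6) → ℕ,
      (∀ e ∈ triangularPrism.edgeSet, c e < k) ∧ IsStarEdgeColoring triangularPrism c} :=
    ⟨myc, by decide, myc_star⟩
  rw [starChromaticIndex]
  refine le_antisymm (Nat.sInf_le h6) (le_csInf ⟨6, h6⟩ ?_)
  rintro k ⟨c, hbk, hstar⟩
  by_contra hlt
  push_neg at hlt
  exact lower5 c (fun e he => lt_of_lt_of_le (hbk e he) (by omega)) hstar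
end

section
/- Every tree T with maximum degree Δ satisfies χ'_s(T) ≤ ⌊3Δ/2⌋, i.e., T admits a star edge coloring using at most ⌊3Δ/2⌋ colors. -/
open SimpleGraph

section StarTreeNS
open SimpleGraph List

namespace StarTreeProof

variable {V : Type*} [Fintype V] [LinearOrder V]

/-- children of `t` w.r.t. a parent function and root. -/
def ch (r : V) (par : V → V) (t : V) : Finset V :=
  Finset.univ.filter (fun x => x ≠ r ∧ par x = t)

/-- index of `v` among its siblings. -/
noncomputable def ix (r : V) (par : V → V) (v : V) : ℕ :=
  ((ch r par (par v)).sort (· ≤ ·)).idxOf v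

/-- One step of the coloring construction: given parent's data
`(cp, fp, Lp)` (parent's edge color, parent's fresh-count, parent's list of
allowed child colors), whether the grandparent is the root (`rt`), the index
`i` of the vertex among its siblings and the number `s` of siblings, produce
the vertex's data. -/
def freshL (K : ℕ) (rt : Bool) (cp : ℕ) (Lp : List ℕ) (i s : ℕ) : List ℕ :=
  (List.range K).filter
    (fun a => decide (a ∉ Lp.take s) && decide (a ≠ Lp.getD i 0) && (rt || decide (a ≠ cp)))

/-- window size -/
def wF (K Δ fp i s : ℕ) : ℕ := (Δ - 1 + s + (if fp ≤ i then 1 else 0)) - K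

def winL (K Δ : ℕ) (fp : ℕ) (Lp : List ℕ) (i s : ℕ) : List ℕ :=
  (List.range (wF K Δ fp i s)).map (fun j => (Lp.take s).getD ((i + 1 + j) % s) 0)

def bonusL (rt : Bool) (cp fp i : ℕ) : List ℕ :=
  if rt = true ∨ fp ≤ i then [] else [cp]

def stepF (K Δ : ℕ) (rt : Bool) (cp fp : ℕ) (Lp : List ℕ) (i s : ℕ) : ℕ × ℕ × List ℕ :=
  (Lp.getD i 0, (freshL K rt cp Lp i s).length,
    freshL K rt cp Lp i s ++ (winL K Δ fp Lp i s ++ bonusL rt cp fp i))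

/-- fuel-based recursion computing each vertex's data. -/
noncomputable def gaux (K Δ : ℕ) (r : V) (par : V → V) : ℕ → V → ℕ × ℕ × List ℕ
  | 0, _ => (K, K, List.range K)
  | (n+1), v =>
    if v = r then (K, K, List.range K) else
      let pr := gaux K Δ r par n (par v)
      stepF K Δ (decide (par v = r)) pr.1 pr.2.1 pr.2.2 (ix r par v) ((ch r par (par v)).card)

noncomputable def gg (K Δ : ℕ) (r : V) (par : V → V) (dep : V → ℕ) (v : V) : ℕ × ℕ × List ℕ :=
  gaux K Δ r par (dep v) v

noncomputable def cc (K Δ : ℕ) (r : V) (par : V → V) (dep : V → ℕ) (v : V) : ℕ :=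
  (gg K Δ r par dep v).1

noncomputable def ff (K Δ : ℕ) (r : V) (par : V → V) (dep : V → ℕ) (v : V) : ℕ :=
  (gg K Δ r par dep v).2.1

noncomputable def LL (K Δ : ℕ) (r : V) (par : V → V) (dep : V → ℕ) (v : V) : List ℕ :=
  (gg K Δ r par dep v).2.2

section Step

variable {K Δ : ℕ} {rt : Bool} {cp fp : ℕ} {Lp : List ℕ} {i s : ℕ}

lemma mem_freshL {a : ℕ} :
    a ∈ freshL K rt cp Lp i s ↔
      a < K ∧ a ∉ Lp.take s ∧ a ≠ Lp.getD i 0 ∧ (rt = true ∨ a ≠ cp) := by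
  simp [freshL, List.mem_filter, and_assoc]

lemma nodup_freshL : (freshL K rt cp Lp i s).Nodup :=
  List.nodup_range.filter _

lemma mem_winL {a : ℕ} :
    a ∈ winL K Δ fp Lp i s ↔
      ∃ j, j < wF K Δ fp i s ∧ (Lp.take s).getD ((i + 1 + j) % s) 0 = a := by
  simp [winL]

lemma length_us (Hs : s ≤ Lp.length) : (Lp.take s).length = s := by
  simp [Hs]

lemma us_getD (Hs : s ≤ Lp.length) {p : ℕ} (hp : p < s) :
    (Lp.take s).getD p 0 = Lp.getD p 0 := by
  rw [List.getD_eq_getElem _ _ (by rw [length_us Hs]; exact hp),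
    List.getD_eq_getElem _ _ (by omega), List.getElem_take]

lemma us_nodup (Hnd : Lp.Nodup) : (Lp.take s).Nodup :=
  Hnd.sublist (List.take_sublist s Lp)

lemma wF_le (HK : K = Δ + Δ / 2) (HΔ : 2 ≤ Δ) : wF K Δ fp i s ≤ s - 1 := by
  unfold wF; split <;> omega

lemma winL_subset {a : ℕ} (His : i < s) (Hs : s ≤ Lp.length)
    (ha : a ∈ winL K Δ fp Lp i s) : a ∈ Lp.take s := by
  rw [mem_winL] at ha
  obtain ⟨j, _, hj⟩ := ha
  rw [← hj, List.getD_eq_getElem _ _ (by rw [length_us Hs]; exact Nat.mod_lt _ (by omega))]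
  exact List.getElem_mem _

lemma winL_pos_ne (HK : K = Δ + Δ / 2) (HΔ : 2 ≤ Δ) (His : i < s) {j : ℕ}
    (hj : j < wF K Δ fp i s) : (i + 1 + j) % s ≠ i := by
  intro h
  have hw := wF_le (fp := fp) (i := i) (s := s) HK HΔ
  have hi : i % s = i := Nat.mod_eq_of_lt His
  have : (i + (1 + j)) % s = (i + 0) % s := by
    rw [← Nat.add_assoc, h, Nat.add_zero, hi]
  have h2 : (1 + j) % s = 0 % s := Nat.ModEq.add_left_cancel' i this
  have h3 : s ∣ (1 + j) := by
    simpa [Nat.dvd_iff_mod_eq_zero] using h2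
  have := Nat.le_of_dvd (by omega) h3
  omega

lemma nodup_winL (HK : K = Δ + Δ / 2) (HΔ : 2 ≤ Δ) (Hnd : Lp.Nodup) (His : i < s)
    (Hs : s ≤ Lp.length) : (winL K Δ fp Lp i s).Nodup := by
  have hw := wF_le (K := K) (Δ := Δ) (fp := fp) (i := i) (s := s) HK HΔ
  refine List.nodup_range.map_on ?_
  intro j1 h1 j2 h2 heq
  rw [List.mem_range] at h1 h2
  have hp1 : (i + 1 + j1) % s < s := Nat.mod_lt _ (by omega)
  have hp2 : (i + 1 + j2) % s < s := Nat.mod_lt _ (by omega)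
  rw [List.getD_eq_getElem _ _ (by rw [length_us Hs]; exact hp1),
    List.getD_eq_getElem _ _ (by rw [length_us Hs]; exact hp2)] at heq
  have hpe : (i + 1 + j1) % s = (i + 1 + j2) % s :=
    (List.Nodup.getElem_inj_iff (us_nodup Hnd)).mp heq
  have h4 : j1 % s = j2 % s := Nat.ModEq.add_left_cancel' (i + 1) hpe
  rw [Nat.mod_eq_of_lt (by omega), Nat.mod_eq_of_lt (by omega)] at h4
  exact h4

lemma mem_bonusL {a : ℕ} (ha : a ∈ bonusL rt cp fp i) :
    a = cp ∧ rt = false ∧ i < fp := by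
  by_cases h : rt = true ∨ fp ≤ i
  · simp [bonusL, h] at ha
  · rw [bonusL, if_neg h, List.mem_singleton] at ha
    push_neg at h
    exact ⟨ha, by simpa using h.1, by omega⟩

lemma mem_stepF_list {a : ℕ} :
    a ∈ (stepF K Δ rt cp fp Lp i s).2.2 ↔
      a ∈ freshL K rt cp Lp i s ∨ a ∈ winL K Δ fp Lp i s ∨ a ∈ bonusL rt cp fp i := by
  simp [stepF]

lemma stepF_lt (Hlt : ∀ a ∈ Lp, a < K) (His : i < s) (Hs : s ≤ Lp.length)
    (Hcpk : rt = false → cp < K) :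
    ∀ a ∈ (stepF K Δ rt cp fp Lp i s).2.2, a < K := by
  intro a ha
  rw [mem_stepF_list] at ha
  rcases ha with h | h | h
  · exact (mem_freshL.mp h).1
  · exact Hlt a (List.take_subset _ _ (winL_subset His Hs h))
  · obtain ⟨rfl, h1, _⟩ := mem_bonusL h
    exact Hcpk h1

lemma stepF_self (HK : K = Δ + Δ / 2) (HΔ : 2 ≤ Δ) (Hnd : Lp.Nodup) (Hcp : cp ∉ Lp)
    (His : i < s) (Hs : s ≤ Lp.length) :
    (stepF K Δ rt cp fp Lp i s).1 ∉ (stepF K Δ rt cp fp Lp i s).2.2 := by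
  intro ha
  rw [mem_stepF_list] at ha
  have hcv : Lp.getD i 0 ∈ Lp := by
    rw [List.getD_eq_getElem _ _ (by omega)]; exact List.getElem_mem _
  rcases ha with h | h | h
  · exact (mem_freshL.mp h).2.2.1 rfl
  · rw [mem_winL] at h
    obtain ⟨j, hj, hval⟩ := h
    have hpne := winL_pos_ne (fp := fp) HK HΔ His hj
    have hp : (i + 1 + j) % s < s := Nat.mod_lt _ (by omega)
    rw [List.getD_eq_getElem _ _ (by rw [length_us Hs]; exact hp)] at hval
    have : (Lp.take s).getD i 0 = Lp.getD i 0 := us_getD Hs His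
    rw [List.getD_eq_getElem _ _ (by rw [length_us Hs]; exact His)] at this
    rw [show (stepF K Δ rt cp fp Lp i s).1 = Lp.getD i 0 from rfl, ← this] at hval
    exact hpne ((List.Nodup.getElem_inj_iff (us_nodup Hnd)).mp hval)
  · obtain ⟨h0, _, _⟩ := mem_bonusL h
    rw [show (stepF K Δ rt cp fp Lp i s).1 = Lp.getD i 0 from rfl] at h0
    exact Hcp (h0 ▸ hcv)

lemma stepF_nodup (HK : K = Δ + Δ / 2) (HΔ : 2 ≤ Δ) (Hnd : Lp.Nodup) (Hcp : cp ∉ Lp)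
    (His : i < s) (Hs : s ≤ Lp.length) :
    (stepF K Δ rt cp fp Lp i s).2.2.Nodup := by
  show (freshL K rt cp Lp i s ++ (winL K Δ fp Lp i s ++ bonusL rt cp fp i)).Nodup
  rw [List.nodup_append, List.nodup_append]
  have hbn : (bonusL rt cp fp i).Nodup := by
    by_cases h : rt = true ∨ fp ≤ i <;> simp [bonusL, h]
  refine ⟨nodup_freshL, ⟨nodup_winL HK HΔ Hnd His Hs, hbn, ?_⟩, ?_⟩
  · intro x hx y hx' hxy
    subst hxy
    obtain ⟨rfl, _, _⟩ := mem_bonusL hx'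
    exact Hcp (List.take_subset _ _ (winL_subset His Hs hx))
  · intro x hx y hx' hxy
    subst hxy
    have hfx := mem_freshL.mp hx
    rcases List.mem_append.mp hx' with h | h
    · exact hfx.2.1 (winL_subset His Hs h)
    · obtain ⟨rfl, h1, _⟩ := mem_bonusL h
      rcases hfx.2.2.2 with h2 | h2
      · rw [h1] at h2; cases h2
      · exact h2 rfl

lemma stepF_dnot (Hcp : cp ∉ Lp) (His : i < s) (Hs : s ≤ Lp.length)
    (h1 : rt = false) (h2 : fp ≤ i) :
    cp ∉ (stepF K Δ rt cp fp Lp i s).2.2 := by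
  intro ha
  rw [mem_stepF_list] at ha
  rcases ha with h | h | h
  · rcases (mem_freshL.mp h).2.2.2 with h3 | h3
    · rw [h1] at h3; cases h3
    · exact h3 rfl
  · exact Hcp (List.take_subset _ _ (winL_subset His Hs h))
  · obtain ⟨_, _, h3⟩ := mem_bonusL h
    omega

lemma stepF_fab :
    ∀ a ∈ (stepF K Δ rt cp fp Lp i s).2.2.take (stepF K Δ rt cp fp Lp i s).2.1,
      (a ∉ Lp.take s ∧ a ≠ Lp.getD i 0) ∧ (rt = false → a ≠ cp) := by
  intro a ha
  have : (stepF K Δ rt cp fp Lp i s).2.2.take (stepF K Δ rt cp fp Lp i s).2.1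
      = freshL K rt cp Lp i s := by
    show (freshL K rt cp Lp i s ++ _).take (freshL K rt cp Lp i s).length = _
    exact List.take_left
  rw [this] at ha
  have h := mem_freshL.mp ha
  refine ⟨⟨h.2.1, h.2.2.1⟩, fun hrt => ?_⟩
  rcases h.2.2.2 with h2 | h2
  · rw [hrt] at h2; cases h2
  · exact h2

lemma stepF_wmem (Hcp : cp ∉ Lp) :
    ∀ a ∈ (stepF K Δ rt cp fp Lp i s).2.2, a ∈ Lp.take s →
      ∃ jd, jd < wF K Δ fp i s ∧ a = (Lp.take s).getD ((i + 1 + jd) % s) 0 := by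
  intro a ha hus
  rw [mem_stepF_list] at ha
  rcases ha with h | h | h
  · exact absurd hus (mem_freshL.mp h).2.1
  · obtain ⟨j, hj, hval⟩ := mem_winL.mp h
    exact ⟨j, hj, hval.symm⟩
  · obtain ⟨rfl, _, _⟩ := mem_bonusL h
    exact absurd (List.take_subset _ _ hus) Hcp

lemma stepF_length :
    (stepF K Δ rt cp fp Lp i s).2.2.length =
      (stepF K Δ rt cp fp Lp i s).2.1 + wF K Δ fp i s +
        (if rt = true ∨ fp ≤ i then 0 else 1) := by
  show (freshL K rt cp Lp i s ++ (winL K Δ fp Lp i s ++ bonusL rt cp fp i)).length = _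
  have h1 : (winL K Δ fp Lp i s).length = wF K Δ fp i s := by simp [winL]
  have h2 : (bonusL rt cp fp i).length = if rt = true ∨ fp ≤ i then 0 else 1 := by
    by_cases h : rt = true ∨ fp ≤ i <;> simp [bonusL, h]
  rw [List.length_append, List.length_append, h1, h2]
  have : (stepF K Δ rt cp fp Lp i s).2.1 = (freshL K rt cp Lp i s).length := rfl
  rw [this]
  by_cases h : rt = true ∨ fp ≤ i <;> simp [h] <;> omega

lemma stepF_freshlen (His : i < s) (Hs : s ≤ Lp.length) :
    K ≤ (stepF K Δ rt cp fp Lp i s).2.1 + s + (if rt = true then 0 else 1) := by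
  classical
  set f : ℕ → Bool :=
    fun a => decide (a ∉ Lp.take s) && decide (a ≠ Lp.getD i 0) && (rt || decide (a ≠ cp)) with hf
  have hpart := List.length_eq_length_filter_add (l := List.range K) f
  have hbadlen : ((List.range K).filter (fun a => ! f a)).length ≤
      s + (if rt = true then 0 else 1) := by
    set bad := (List.range K).filter (fun a => ! f a) with hbad
    have hbnd : bad.Nodup := List.nodup_range.filter _
    set other : List ℕ := Lp.take s ++ (if rt = true then [] else [cp]) with hother
    have hsub : ∀ a ∈ bad, a ∈ other := by
      intro a ha
      rw [hbad, List.mem_filter] at ha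
      have := ha.2
      rw [hf] at this
      simp only [Bool.not_eq_true', Bool.and_eq_false_iff, Bool.or_eq_false_iff,
        decide_eq_false_iff_not, not_not] at this
      have hcv : Lp.getD i 0 ∈ Lp.take s := by
        rw [← us_getD Hs His, List.getD_eq_getElem _ _ (by rw [length_us Hs]; exact His)]
        exact List.getElem_mem _
      rcases this with (h | h) | ⟨hrt, h2⟩
      · exact List.mem_append_left _ h
      · rw [h]; exact List.mem_append_left _ hcv
      · rw [hother, h2]
        simp [hrt]
    calc bad.length = bad.toFinset.card := (List.toFinset_card_of_nodup hbnd).symm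
      _ ≤ other.toFinset.card := by
          apply Finset.card_le_card
          intro x hx
          rw [List.mem_toFinset] at hx ⊢
          exact hsub x hx
      _ ≤ other.length := List.toFinset_card_le _
      _ ≤ s + (if rt = true then 0 else 1) := by
          rw [hother, List.length_append, length_us Hs]
          by_cases h : rt = true <;> simp [h]
  have : (stepF K Δ rt cp fp Lp i s).2.1 = ((List.range K).filter f).length := rfl
  rw [this]
  rw [List.length_range] at hpart
  omega

end Step

section Basic

variable (K Δ : ℕ) (r : V) (par : V → V) (dep : V → ℕ)

lemma mem_ch {x t : V} : x ∈ ch r par t ↔ x ≠ r ∧ par x = t := by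
  simp [ch]

lemma self_mem_ch {v : V} (hv : v ≠ r) : v ∈ ch r par (par v) :=
  (mem_ch r par).mpr ⟨hv, rfl⟩

lemma ix_lt {v : V} (hv : v ≠ r) : ix r par v < (ch r par (par v)).card := by
  rw [ix, ← Finset.length_sort (α := V) (· ≤ ·)]
  exact List.idxOf_lt_length_iff.mpr ((Finset.mem_sort _).mpr (self_mem_ch r par hv))

lemma gaux_congr (hdep0 : dep r = 0) (hdep : ∀ v, v ≠ r → dep v = dep (par v) + 1) :
    ∀ n v, dep v ≤ n → gaux K Δ r par n v = gg K Δ r par dep v := by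
  intro n
  induction n with
  | zero =>
    intro v hv
    have : v = r := by
      by_contra hvr
      have := hdep v hvr; omega
    subst this
    rw [gg, hdep0]
  | succ n IHn =>
    intro v hv
    by_cases hvr : v = r
    · subst hvr
      rw [gg, hdep0]
      simp [gaux]
    · have hd := hdep v hvr
      have h1 : dep (par v) ≤ n := by omega
      rw [gg]
      have hd2 : dep v = dep (par v) + 1 := hd
      rw [hd2]
      simp only [gaux, hvr, if_false]
      rw [IHn (par v) h1]
      rfl

lemma gg_root (hdep0 : dep r = 0) : gg K Δ r par dep r = (K, K, List.range K) := by
  rw [gg, hdep0]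
  rfl

lemma gg_ne (hdep0 : dep r = 0) (hdep : ∀ v, v ≠ r → dep v = dep (par v) + 1) {v : V} (hv : v ≠ r) :
    gg K Δ r par dep v = stepF K Δ (decide (par v = r)) (cc K Δ r par dep (par v))
      (ff K Δ r par dep (par v)) (LL K Δ r par dep (par v)) (ix r par v)
      ((ch r par (par v)).card) := by
  have hd := hdep v hv
  rw [gg, hd]
  simp only [gaux, hv, if_false]
  rw [gaux_congr K Δ r par dep hdep0 hdep _ _ (le_refl _)]
  rfl

lemma cc_root (hdep0 : dep r = 0) : cc K Δ r par dep r = K := by rw [cc, gg_root K Δ r par dep hdep0]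

lemma ff_root (hdep0 : dep r = 0) : ff K Δ r par dep r = K := by rw [ff, gg_root K Δ r par dep hdep0]

lemma LL_root (hdep0 : dep r = 0) : LL K Δ r par dep r = List.range K := by rw [LL, gg_root K Δ r par dep hdep0]

end Basic

section Inv

variable (K Δ : ℕ) (r : V) (par : V → V) (dep : V → ℕ)

lemma cc_ne (hdep0 : dep r = 0) (hdep : ∀ v, v ≠ r → dep v = dep (par v) + 1)
    {v : V} (hv : v ≠ r) :
    cc K Δ r par dep v = (LL K Δ r par dep (par v)).getD (ix r par v) 0 := by
  rw [cc, gg_ne K Δ r par dep hdep0 hdep hv]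
  rfl

lemma LL_ne (hdep0 : dep r = 0) (hdep : ∀ v, v ≠ r → dep v = dep (par v) + 1)
    {v : V} (hv : v ≠ r) :
    LL K Δ r par dep v = (stepF K Δ (decide (par v = r)) (cc K Δ r par dep (par v))
      (ff K Δ r par dep (par v)) (LL K Δ r par dep (par v)) (ix r par v)
      ((ch r par (par v)).card)).2.2 := by
  rw [LL, gg_ne K Δ r par dep hdep0 hdep hv]

lemma ff_ne (hdep0 : dep r = 0) (hdep : ∀ v, v ≠ r → dep v = dep (par v) + 1)
    {v : V} (hv : v ≠ r) :
    ff K Δ r par dep v = (stepF K Δ (decide (par v = r)) (cc K Δ r par dep (par v))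
      (ff K Δ r par dep (par v)) (LL K Δ r par dep (par v)) (ix r par v)
      ((ch r par (par v)).card)).2.1 := by
  rw [ff, gg_ne K Δ r par dep hdep0 hdep hv]

/-- The inductive invariant of the construction. -/
structure Inv (v : V) : Prop where
  nodup : (LL K Δ r par dep v).Nodup
  lt : ∀ a ∈ LL K Δ r par dep v, a < K
  self : cc K Δ r par dep v ∉ LL K Δ r par dep v
  clen : (ch r par v).card ≤ (LL K Δ r par dep v).length
  cfre : (ch r par v).card ≤ ff K Δ r par dep v + Δ / 2
  clt : v ≠ r → cc K Δ r par dep v < K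
  dnot : v ≠ r → ff K Δ r par dep (par v) ≤ ix r par v →
    cc K Δ r par dep (par v) ∉ LL K Δ r par dep v
  fab : v ≠ r → ∀ a ∈ (LL K Δ r par dep v).take (ff K Δ r par dep v),
    a ∉ (LL K Δ r par dep (par v)).take ((ch r par (par v)).card) ∧
      (par v ≠ r → a ≠ cc K Δ r par dep (par v))
  wmem : v ≠ r → ∀ a ∈ LL K Δ r par dep v,
    a ∈ (LL K Δ r par dep (par v)).take ((ch r par (par v)).card) →
    ∃ jd, jd < wF K Δ (ff K Δ r par dep (par v)) (ix r par v) ((ch r par (par v)).card) ∧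
      a = ((LL K Δ r par dep (par v)).take ((ch r par (par v)).card)).getD
          ((ix r par v + 1 + jd) % ((ch r par (par v)).card)) 0

lemma inv_all (HK : K = Δ + Δ / 2) (HΔ : 2 ≤ Δ)
    (hdep0 : dep r = 0) (hdep : ∀ v, v ≠ r → dep v = dep (par v) + 1)
    (hdeg : ∀ t, (ch r par t).card + (if t = r then 0 else 1) ≤ Δ) :
    ∀ v, Inv K Δ r par dep v := by
  have main : ∀ n v, dep v < n → Inv K Δ r par dep v := by
    intro n
    induction n with
    | zero => intro v hv; omega
    | succ n IH =>
      intro v hv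
      by_cases hvr : v = r
      · -- root case
        subst hvr
        have hL := LL_root K Δ v par dep hdep0
        have hc := cc_root K Δ v par dep hdep0
        have hf := ff_root K Δ v par dep hdep0
        have hdegr := hdeg v
        rw [if_pos rfl] at hdegr
        refine ⟨?_, ?_, ?_, ?_, ?_, ?_, ?_, ?_, ?_⟩
        · rw [hL]; exact List.nodup_range
        · intro a ha; rw [hL] at ha; exact List.mem_range.mp ha
        · rw [hL, hc]; simp
        · rw [hL, List.length_range]; omega
        · rw [hf]; omega
        · intro h; exact absurd rfl h
        · intro h; exact absurd rfl h
        · intro h; exact absurd rfl h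
        · intro h; exact absurd rfl h
      · -- non-root case
        have hu : dep (par v) < n := by have := hdep v hvr; omega
        have IHu := IH (par v) hu
        have His : ix r par v < (ch r par (par v)).card := ix_lt r par hvr
        have Hs : (ch r par (par v)).card ≤ (LL K Δ r par dep (par v)).length := IHu.clen
        have Hnd := IHu.nodup
        have Hlt := IHu.lt
        have Hcp := IHu.self
        have Hcpk : (decide (par v = r)) = false → cc K Δ r par dep (par v) < K := by
          intro h
          exact IHu.clt (by simpa using h)
        have hLv := LL_ne K Δ r par dep hdep0 hdep hvr
        have hcv := cc_ne K Δ r par dep hdep0 hdep hvr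
        have hfv := ff_ne K Δ r par dep hdep0 hdep hvr
        have hrsk_root : par v = r → ¬ (ff K Δ r par dep (par v) ≤ ix r par v) := by
          intro hur
          have h1 : (LL K Δ r par dep (par v)).length = K := by
            rw [hur, LL_root K Δ r par dep hdep0, List.length_range]
          have h2 : ff K Δ r par dep (par v) = K := by
            rw [hur, ff_root K Δ r par dep hdep0]
          omega
        have hdegv := hdeg v
        rw [if_neg hvr] at hdegv
        have hdegu := hdeg (par v)
        -- length facts
        have hlen := stepF_length (K := K) (Δ := Δ) (rt := decide (par v = r))
          (cp := cc K Δ r par dep (par v)) (fp := ff K Δ r par dep (par v))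
          (Lp := LL K Δ r par dep (par v)) (i := ix r par v) (s := (ch r par (par v)).card)
        have hflen := stepF_freshlen (K := K) (Δ := Δ) (rt := decide (par v = r))
          (cp := cc K Δ r par dep (par v)) (fp := ff K Δ r par dep (par v)) His Hs
        have hlen2 : (LL K Δ r par dep v).length = ff K Δ r par dep v +
            wF K Δ (ff K Δ r par dep (par v)) (ix r par v) ((ch r par (par v)).card) +
            (if (decide (par v = r)) = true ∨ ff K Δ r par dep (par v) ≤ ix r par v
              then 0 else 1) := by
          rw [hLv, hfv]; exact hlen
        have hflen2 : K ≤ ff K Δ r par dep v + (ch r par (par v)).card +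
            (if (decide (par v = r)) = true then 0 else 1) := by
          rw [hfv]; exact hflen
        have harith : (ch r par v).card ≤ (LL K Δ r par dep v).length ∧
            (ch r par v).card ≤ ff K Δ r par dep v + Δ / 2 := by
          by_cases hur : par v = r
          · rw [if_pos hur] at hdegu
            have h3 := hrsk_root hur
            rw [if_pos (show (decide (par v = r)) = true ∨ ff K Δ r par dep (par v) ≤ ix r par v
              from Or.inl (by simp [hur]))] at hlen2
            rw [if_pos (show (decide (par v = r)) = true from by simp [hur])] at hflen2
            rw [wF, if_neg h3] at hlen2
            omega
          · rw [if_neg hur] at hdegu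
            rw [if_neg (by simp [hur])] at hflen2
            by_cases hrsk : ff K Δ r par dep (par v) ≤ ix r par v
            · rw [if_pos (Or.inr hrsk)] at hlen2
              rw [wF, if_pos hrsk] at hlen2
              omega
            · rw [if_neg (by simp [hur, hrsk])] at hlen2
              rw [wF, if_neg hrsk] at hlen2
              omega
        refine ⟨?_, ?_, ?_, harith.1, harith.2, ?_, ?_, ?_, ?_⟩
        · rw [hLv]; exact stepF_nodup HK HΔ Hnd Hcp His Hs
        · rw [hLv]; exact stepF_lt Hlt His Hs Hcpk
        · rw [hLv, hcv]
          exact stepF_self HK HΔ Hnd Hcp His Hs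
        · intro _
          rw [hcv]
          have hmm : (LL K Δ r par dep (par v)).getD (ix r par v) 0
              ∈ LL K Δ r par dep (par v) := by
            rw [List.getD_eq_getElem _ _ (by omega)]
            exact List.getElem_mem _
          exact Hlt _ hmm
        · intro _ hrsk
          by_cases hur : par v = r
          · rw [hur, cc_root K Δ r par dep hdep0]
            intro hmem
            rw [hLv] at hmem
            have := stepF_lt Hlt His Hs Hcpk _ hmem
            omega
          · rw [hLv]
            exact stepF_dnot Hcp His Hs (by simp [hur]) hrsk
        · intro _ a ha
          rw [hLv, hfv] at ha
          have h := stepF_fab _ ha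
          refine ⟨h.1.1, fun hur => h.2 (by simp [hur])⟩
        · intro _ a ha hus
          rw [hLv] at ha
          exact stepF_wmem Hcp a ha hus
  exact fun v => main (dep v + 1) v (by omega)

end Inv

section StarLemmas

variable (K Δ : ℕ) (r : V) (par : V → V) (dep : V → ℕ)

lemma getD_mem_take {l : List ℕ} {m p : ℕ} (hp : p < m) (hpl : p < l.length) :
    l.getD p 0 ∈ l.take m := by
  rw [List.getD_eq_getElem _ _ hpl]
  have hlt : p < (l.take m).length := by
    rw [List.length_take]; omega
  have h2 : (l.take m)[p] ∈ l.take m := List.getElem_mem _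
  rwa [List.getElem_take] at h2

lemma getD_inj {l : List ℕ} (hnd : l.Nodup) {p q : ℕ} (hp : p < l.length) (hq : q < l.length)
    (h : l.getD p 0 = l.getD q 0) : p = q := by
  rw [List.getD_eq_getElem _ _ hp, List.getD_eq_getElem _ _ hq] at h
  exact (hnd.getElem_inj_iff).mp h

lemma cc_mem_LL (HK : K = Δ + Δ / 2) (HΔ : 2 ≤ Δ)
    (hdep0 : dep r = 0) (hdep : ∀ v, v ≠ r → dep v = dep (par v) + 1)
    (hdeg : ∀ t, (ch r par t).card + (if t = r then 0 else 1) ≤ Δ) {z : V} (hz : z ≠ r) : cc K Δ r par dep z ∈ LL K Δ r par dep (par z) := by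
  have hinv := inv_all K Δ r par dep HK HΔ hdep0 hdep hdeg (par z)
  have h1 : ix r par z < (LL K Δ r par dep (par z)).length :=
    lt_of_lt_of_le (ix_lt r par hz) hinv.clen
  rw [cc_ne K Δ r par dep hdep0 hdep hz, List.getD_eq_getElem _ _ h1]
  exact List.getElem_mem _

lemma cc_mem_us (HK : K = Δ + Δ / 2) (HΔ : 2 ≤ Δ)
    (hdep0 : dep r = 0) (hdep : ∀ v, v ≠ r → dep v = dep (par v) + 1)
    (hdeg : ∀ t, (ch r par t).card + (if t = r then 0 else 1) ≤ Δ) {z : V} (hz : z ≠ r) :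
    cc K Δ r par dep z ∈ (LL K Δ r par dep (par z)).take ((ch r par (par z)).card) := by
  have hinv := inv_all K Δ r par dep HK HΔ hdep0 hdep hdeg (par z)
  have h1 : ix r par z < (LL K Δ r par dep (par z)).length :=
    lt_of_lt_of_le (ix_lt r par hz) hinv.clen
  rw [cc_ne K Δ r par dep hdep0 hdep hz]
  exact getD_mem_take (ix_lt r par hz) h1

lemma ix_inj {x y : V} (hx : x ≠ r) (hy : y ≠ r) (hxy : x ≠ y) (hp : par x = par y) :
    ix r par x ≠ ix r par y := by
  intro h
  apply hxy
  have hxm : x ∈ (ch r par (par x)).sort (· ≤ ·) :=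
    (Finset.mem_sort _).mpr (self_mem_ch r par hx)
  have hym : y ∈ (ch r par (par x)).sort (· ≤ ·) := by
    rw [hp]; exact (Finset.mem_sort _).mpr (self_mem_ch r par hy)
  have h1 : ((ch r par (par x)).sort (· ≤ ·)).idxOf x < ((ch r par (par x)).sort (· ≤ ·)).length :=
    List.idxOf_lt_length_iff.mpr hxm
  have hxe : ((ch r par (par x)).sort (· ≤ ·))[((ch r par (par x)).sort (· ≤ ·)).idxOf x] = x :=
    List.getElem_idxOf h1
  have h2 : ((ch r par (par x)).sort (· ≤ ·)).idxOf y < ((ch r par (par x)).sort (· ≤ ·)).length :=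
    List.idxOf_lt_length_iff.mpr hym
  have hye : ((ch r par (par x)).sort (· ≤ ·))[((ch r par (par x)).sort (· ≤ ·)).idxOf y] = y :=
    List.getElem_idxOf h2
  have hix : ix r par x = ((ch r par (par x)).sort (· ≤ ·)).idxOf x := rfl
  have hiy : ix r par y = ((ch r par (par x)).sort (· ≤ ·)).idxOf y := by
    rw [ix, hp]
  rw [hix, hiy] at h
  simp only [h] at hxe
  exact hxe.symm.trans hye

lemma cc_sib_ne (HK : K = Δ + Δ / 2) (HΔ : 2 ≤ Δ)
    (hdep0 : dep r = 0) (hdep : ∀ v, v ≠ r → dep v = dep (par v) + 1)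
    (hdeg : ∀ t, (ch r par t).card + (if t = r then 0 else 1) ≤ Δ) {x y : V} (hx : x ≠ r) (hy : y ≠ r) (hxy : x ≠ y) (hp : par x = par y) :
    cc K Δ r par dep x ≠ cc K Δ r par dep y := by
  have hinv := inv_all K Δ r par dep HK HΔ hdep0 hdep hdeg (par x)
  have hix : ix r par x < (LL K Δ r par dep (par x)).length :=
    lt_of_lt_of_le (ix_lt r par hx) hinv.clen
  have hiy : ix r par y < (LL K Δ r par dep (par x)).length := by
    have := lt_of_lt_of_le (ix_lt r par hy) (inv_all K Δ r par dep HK HΔ hdep0 hdep hdeg (par y)).clen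
    rw [hp]; exact this
  rw [cc_ne K Δ r par dep hdep0 hdep hx, cc_ne K Δ r par dep hdep0 hdep hy]
  have hLe : LL K Δ r par dep (par y) = LL K Δ r par dep (par x) := by rw [hp]
  rw [hLe]
  rw [List.getD_eq_getElem _ _ hix, List.getD_eq_getElem _ _ hiy]
  intro h
  exact ix_inj r par hx hy hxy hp ((List.Nodup.getElem_inj_iff hinv.nodup).mp h)

lemma cc_child_ne (HK : K = Δ + Δ / 2) (HΔ : 2 ≤ Δ)
    (hdep0 : dep r = 0) (hdep : ∀ v, v ≠ r → dep v = dep (par v) + 1)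
    (hdeg : ∀ t, (ch r par t).card + (if t = r then 0 else 1) ≤ Δ) {z x : V} (hz : z ≠ r) (hpz : par z = x) :
    cc K Δ r par dep z ≠ cc K Δ r par dep x := by
  have h1 := cc_mem_LL K Δ r par dep HK HΔ hdep0 hdep hdeg hz
  have h2 := (inv_all K Δ r par dep HK HΔ hdep0 hdep hdeg x).self
  rw [hpz] at h1
  intro h
  rw [h] at h1
  exact h2 h1

/-- Key lemma A : if the color of `x` is "risky" (equal to the color of a sibling of
its parent `t`, or to the color of the edge above `t`'s parent), then no child of `x`
can receive the color of `t`'s edge. -/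
lemma starA (HK : K = Δ + Δ / 2) (HΔ : 2 ≤ Δ)
    (hdep0 : dep r = 0) (hdep : ∀ v, v ≠ r → dep v = dep (par v) + 1)
    (hdeg : ∀ t, (ch r par t).card + (if t = r then 0 else 1) ≤ Δ) {x z : V} (hx : x ≠ r) (ht : par x ≠ r)
    (hcol : (∃ u, u ≠ r ∧ par u = par (par x) ∧ u ≠ par x ∧
              cc K Δ r par dep x = cc K Δ r par dep u) ∨
            (par (par x) ≠ r ∧ cc K Δ r par dep x = cc K Δ r par dep (par (par x))))
    (hz : z ≠ r) (hpz : par z = x) :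
    cc K Δ r par dep z ≠ cc K Δ r par dep (par x) := by
  have hinvt := inv_all K Δ r par dep HK HΔ hdep0 hdep hdeg (par x)
  have hinvx := inv_all K Δ r par dep HK HΔ hdep0 hdep hdeg x
  -- step 1 : x is risky
  have hrisky : ff K Δ r par dep (par x) ≤ ix r par x := by
    by_contra hlt
    push_neg at hlt
    have hmem : cc K Δ r par dep x ∈
        (LL K Δ r par dep (par x)).take (ff K Δ r par dep (par x)) := by
      rw [cc_ne K Δ r par dep hdep0 hdep hx]
      exact getD_mem_take hlt (lt_of_lt_of_le (ix_lt r par hx) hinvt.clen)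
    have hfab := hinvt.fab ht _ hmem
    rcases hcol with ⟨u, hu, hpu, hut, hcu⟩ | ⟨hg, hcg⟩
    · apply hfab.1
      rw [hcu]
      have := cc_mem_us K Δ r par dep HK HΔ hdep0 hdep hdeg hu
      rwa [hpu] at this
    · exact hfab.2 hg hcg
  -- step 2 : conclude
  have hdn := hinvx.dnot hx hrisky
  intro h
  apply hdn
  rw [← h, ← hpz]
  exact cc_mem_LL K Δ r par dep HK HΔ hdep0 hdep hdeg hz

/-- Key lemma B : two distinct siblings cannot mutually exchange colors via children. -/
lemma starB (HK : K = Δ + Δ / 2) (HΔ : 2 ≤ Δ)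
    (hdep0 : dep r = 0) (hdep : ∀ v, v ≠ r → dep v = dep (par v) + 1)
    (hdeg : ∀ t, (ch r par t).card + (if t = r then 0 else 1) ≤ Δ) {x y x' y' : V}
    (hx : x ≠ r) (hy : y ≠ r) (hxy : x ≠ y) (hpxy : par x = par y)
    (hx' : x' ≠ r) (hpx' : par x' = x) (hy' : y' ≠ r) (hpy' : par y' = y)
    (h1 : cc K Δ r par dep x' = cc K Δ r par dep y)
    (h2 : cc K Δ r par dep y' = cc K Δ r par dep x) : False := by
  have hinvt := inv_all K Δ r par dep HK HΔ hdep0 hdep hdeg (par x)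
  have hinvx := inv_all K Δ r par dep HK HΔ hdep0 hdep hdeg x
  have hinvy := inv_all K Δ r par dep HK HΔ hdep0 hdep hdeg y
  have hik : ix r par x < (ch r par (par x)).card := ix_lt r par hx
  have hjk : ix r par y < (ch r par (par x)).card := by
    have := ix_lt r par hy
    rwa [← hpxy] at this
  have hij : ix r par x ≠ ix r par y := ix_inj r par hx hy hxy hpxy
  have hkL : (ch r par (par x)).card ≤ (LL K Δ r par dep (par x)).length := hinvt.clen
  have husl : ((LL K Δ r par dep (par x)).take ((ch r par (par x)).card)).length
      = (ch r par (par x)).card := length_us hkL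
  have husnd : ((LL K Δ r par dep (par x)).take ((ch r par (par x)).card)).Nodup :=
    us_nodup hinvt.nodup
  have hkpos : 0 < (ch r par (par x)).card := by omega
  -- membership of cc y in LL x and in us
  have hmy : cc K Δ r par dep y ∈ LL K Δ r par dep x := by
    rw [← h1]
    have := cc_mem_LL K Δ r par dep HK HΔ hdep0 hdep hdeg hx'
    rwa [hpx'] at this
  have hmyus : cc K Δ r par dep y ∈ (LL K Δ r par dep (par x)).take ((ch r par (par x)).card) := by
    have := cc_mem_us K Δ r par dep HK HΔ hdep0 hdep hdeg hy
    rwa [← hpxy] at this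
  have hmx : cc K Δ r par dep x ∈ LL K Δ r par dep y := by
    rw [← h2]
    have := cc_mem_LL K Δ r par dep HK HΔ hdep0 hdep hdeg hy'
    rwa [hpy'] at this
  have hmxus : cc K Δ r par dep x ∈ (LL K Δ r par dep (par x)).take ((ch r par (par x)).card) :=
    cc_mem_us K Δ r par dep HK HΔ hdep0 hdep hdeg hx
  -- window memberships
  obtain ⟨jd, hjd, hjdval⟩ := hinvx.wmem hx _ hmy hmyus
  obtain ⟨jd', hjd', hjdval'⟩ : ∃ jd', jd' < wF K Δ (ff K Δ r par dep (par x)) (ix r par y)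
      ((ch r par (par x)).card) ∧ cc K Δ r par dep x =
      ((LL K Δ r par dep (par x)).take ((ch r par (par x)).card)).getD
        ((ix r par y + 1 + jd') % ((ch r par (par x)).card)) 0 := by
    have h := hinvy.wmem hy _ hmx
    rw [← hpxy] at h
    exact h hmxus
  -- identify positions
  have hval_y : cc K Δ r par dep y =
      ((LL K Δ r par dep (par x)).take ((ch r par (par x)).card)).getD (ix r par y) 0 := by
    rw [cc_ne K Δ r par dep hdep0 hdep hy, ← hpxy, us_getD hkL hjk]
  have hval_x : cc K Δ r par dep x =
      ((LL K Δ r par dep (par x)).take ((ch r par (par x)).card)).getD (ix r par x) 0 := by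
    rw [cc_ne K Δ r par dep hdep0 hdep hx, us_getD hkL hik]
  have hmod1 : ix r par y = (ix r par x + 1 + jd) % ((ch r par (par x)).card) := by
    refine getD_inj husnd (by omega) (by rw [husl]; exact Nat.mod_lt _ hkpos) ?_
    rw [← hval_y]
    exact hjdval
  have hmod2 : ix r par x = (ix r par y + 1 + jd') % ((ch r par (par x)).card) := by
    refine getD_inj husnd (by omega) (by rw [husl]; exact Nat.mod_lt _ hkpos) ?_
    rw [← hval_x]
    exact hjdval'
  -- remove mods
  have hw1 : wF K Δ (ff K Δ r par dep (par x)) (ix r par x) ((ch r par (par x)).card)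
      ≤ (ch r par (par x)).card - 1 := wF_le HK HΔ
  have hw2 : wF K Δ (ff K Δ r par dep (par x)) (ix r par y) ((ch r par (par x)).card)
      ≤ (ch r par (par x)).card - 1 := wF_le HK HΔ
  have hd1 : ix r par y = ix r par x + 1 + jd ∨
      ix r par y + (ch r par (par x)).card = ix r par x + 1 + jd := by
    rcases Nat.lt_or_ge (ix r par x + 1 + jd) ((ch r par (par x)).card) with h | h
    · left; rw [hmod1, Nat.mod_eq_of_lt h]
    · right
      rw [hmod1, Nat.mod_eq_sub_mod h, Nat.mod_eq_of_lt (by omega)]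
      omega
  have hd2 : ix r par x = ix r par y + 1 + jd' ∨
      ix r par x + (ch r par (par x)).card = ix r par y + 1 + jd' := by
    rcases Nat.lt_or_ge (ix r par y + 1 + jd') ((ch r par (par x)).card) with h | h
    · left; rw [hmod2, Nat.mod_eq_of_lt h]
    · right
      rw [hmod2, Nat.mod_eq_sub_mod h, Nat.mod_eq_of_lt (by omega)]
      omega
  -- final arithmetic
  have hdegt := hdeg (par x)
  have hcfre := hinvt.cfre
  by_cases htr : par x = r
  · rw [if_pos htr] at hdegt
    have hfr : ff K Δ r par dep (par x) = K := by rw [htr, ff_root K Δ r par dep hdep0]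
    have hi1 : ¬ (ff K Δ r par dep (par x) ≤ ix r par x) := by omega
    have hj1 : ¬ (ff K Δ r par dep (par x) ≤ ix r par y) := by omega
    rw [wF, if_neg hi1] at hjd
    rw [wF, if_neg hj1] at hjd'
    omega
  · rw [if_neg htr] at hdegt
    by_cases hi1 : ff K Δ r par dep (par x) ≤ ix r par x <;>
      by_cases hj1 : ff K Δ r par dep (par x) ≤ ix r par y
    · rw [wF, if_pos hi1] at hjd
      rw [wF, if_pos hj1] at hjd'
      omega
    · rw [wF, if_pos hi1] at hjd
      rw [wF, if_neg hj1] at hjd'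
      omega
    · rw [wF, if_neg hi1] at hjd
      rw [wF, if_pos hj1] at hjd'
      omega
    · rw [wF, if_neg hi1] at hjd
      rw [wF, if_neg hj1] at hjd'
      omega

end StarLemmas

section Graph

variable {T : SimpleGraph V}

noncomputable def ptr (hT : T.IsTree) (r v : V) : T.Walk v r :=
  (hT.existsUnique_path v r).choose

lemma ptr_isPath (hT : T.IsTree) (r v : V) : (ptr hT r v).IsPath :=
  (hT.existsUnique_path v r).choose_spec.1

lemma ptr_unique (hT : T.IsTree) (r v : V) (q : T.Walk v r) (hq : q.IsPath) :
    q = ptr hT r v :=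
  (hT.existsUnique_path v r).choose_spec.2 q hq

noncomputable def parG (hT : T.IsTree) (r v : V) : V := (ptr hT r v).getVert 1

noncomputable def depG (hT : T.IsTree) (r v : V) : ℕ := (ptr hT r v).length

lemma ptr_root (hT : T.IsTree) (r : V) : ptr hT r r = Walk.nil :=
  (ptr_unique hT r r Walk.nil Walk.IsPath.nil).symm

lemma depG_root (hT : T.IsTree) (r : V) : depG hT r r = 0 := by
  rw [depG, ptr_root hT r]
  rfl

lemma parG_root (hT : T.IsTree) (r : V) : parG hT r r = r := by
  rw [parG, ptr_root hT r]
  rfl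

lemma ptr_not_nil (hT : T.IsTree) {r v : V} (hv : v ≠ r) : ¬ (ptr hT r v).Nil := by
  generalize hq : ptr hT r v = q
  cases q with
  | nil => exact absurd rfl hv
  | cons h q => exact Walk.not_nil_cons

lemma adj_parG (hT : T.IsTree) {r v : V} (hv : v ≠ r) : T.Adj v (parG hT r v) :=
  Walk.adj_snd (ptr_not_nil hT hv)

lemma depG_parG (hT : T.IsTree) {r v : V} (hv : v ≠ r) :
    depG hT r v = depG hT r (parG hT r v) + 1 := by
  have hnn := ptr_not_nil hT hv
  have htail : (ptr hT r v).tail = ptr hT r (parG hT r v) :=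
    ptr_unique hT r (parG hT r v) (ptr hT r v).tail ((ptr_isPath hT r v).tail)
  have hl : (ptr hT r v).tail.length + 1 = (ptr hT r v).length :=
    Walk.length_tail_add_one hnn
  rw [depG, depG, ← htail, ← hl]
  rfl

lemma ne_root_of_par (hT : T.IsTree) {r x y : V} (hp : parG hT r x = y) (hxy : x ≠ y) :
    x ≠ r := by
  intro h
  subst h
  rw [parG_root hT] at hp
  exact hxy hp

lemma par_dichotomy (hT : T.IsTree) (r : V) {a b : V} (hadj : T.Adj a b) :
    parG hT r a = b ∨ parG hT r b = a := by
  classical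
  by_cases hw : (Walk.cons hadj (ptr hT r b)).IsPath
  · left
    have h := ptr_unique hT r a (Walk.cons hadj (ptr hT r b)) hw
    rw [parG, ← h, Walk.getVert_cons_succ, Walk.getVert_zero]
  · right
    have hbp := ptr_isPath hT r b
    have hmem : a ∈ (ptr hT r b).support := by
      by_contra hmem
      exact hw ((Walk.cons_isPath_iff hadj _).mpr ⟨hbp, hmem⟩)
    have hsingle : (Walk.cons hadj.symm Walk.nil : T.Walk b a).IsPath := by
      rw [Walk.cons_isPath_iff]
      refine ⟨Walk.IsPath.nil, ?_⟩
      simp [hadj.ne']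
    have htu : (ptr hT r b).takeUntil a hmem = Walk.cons hadj.symm Walk.nil :=
      ((hT.existsUnique_path b a).unique (hbp.takeUntil hmem) hsingle)
    have hspec := (ptr hT r b).take_spec hmem
    rw [htu, Walk.cons_nil_append] at hspec
    rw [parG, ← hspec, Walk.getVert_cons_succ, Walk.getVert_zero]

lemma child_of_min (hT : T.IsTree) (r : V) {a b : V} (hadj : T.Adj a b)
    (hd : depG hT r b ≤ depG hT r a) : parG hT r a = b := by
  rcases par_dichotomy hT r hadj with h | h
  · exact h
  · exfalso
    have hbr : b ≠ r := by
      intro hb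
      subst hb
      rw [parG_root hT] at h
      exact hadj.ne h.symm
    have := depG_parG hT hbr
    rw [h] at this
    omega

lemma edge_form (hT : T.IsTree) (r : V) {e : Sym2 V} (he : e ∈ T.edgeSet) :
    ∃ b, b ≠ r ∧ e = s(parG hT r b, b) := by
  induction e with
  | _ a b =>
    rw [mem_edgeSet] at he
    rcases par_dichotomy hT r he with h | h
    · exact ⟨a, ne_root_of_par hT h he.ne, by rw [h, Sym2.eq_swap]⟩
    · exact ⟨b, ne_root_of_par hT h he.ne', by rw [h]⟩

end Graph

end StarTreeProof

end StarTreeNS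

open StarTreeProof in
/-- Every tree with maximum degree `Δ` has star chromatic index
at most `⌊3Δ/2⌋`. -/
theorem star_chromatic_index_tree {V : Type*} [Fintype V]
    (T : SimpleGraph V) (hT : T.IsTree) (Δ : ℕ)
    (hΔle : ∀ v : V, (T.neighborSet v).ncard ≤ Δ)
    (hΔmax : ∃ v : V, (T.neighborSet v).ncard = Δ) :
    starChromaticIndex T ≤ 3 * Δ / 2 := by
  classical
  letI : LinearOrder V := LinearOrder.lift' (Fintype.equivFin V) (Equiv.injective _)
  by_cases hΔ2 : 2 ≤ Δ
  swap
  · -- small case : Δ ≤ 1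
    have hkey : ∀ p q m : V, p ≠ q → T.Adj m p → T.Adj m q → False := by
      intro p q m hpq h1 h2
      have hsub : ({p, q} : Set V) ⊆ T.neighborSet m := by
        intro x hx
        rcases hx with rfl | rfl
        · exact h1
        · exact h2
      have h2' : ({p, q} : Set V).ncard = 2 := Set.ncard_pair hpq
      have := Set.ncard_le_ncard hsub (Set.toFinite _)
      have := hΔle m
      omega
    have hmem : (3 * Δ / 2) ∈ {k | ∃ c : Sym2 V → ℕ,
        (∀ e ∈ T.edgeSet, c e < k) ∧ IsStarEdgeColoring T c} := by
      refine ⟨fun _ => 0, ?_, ?_, ?_, ?_⟩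
      · intro e he
        rcases Nat.eq_zero_or_pos Δ with hΔ0 | hΔ0
        · exfalso
          induction e with
          | _ a b =>
            rw [SimpleGraph.mem_edgeSet] at he
            have hb : b ∈ T.neighborSet a := he
            have : 0 < (T.neighborSet a).ncard :=
              (Set.ncard_pos (Set.toFinite _)).mpr ⟨b, hb⟩
            have := hΔle a
            omega
        · have : Δ = 1 := by omega
          subst this
          norm_num
      · rintro e1 he1 e2 he2 hne ⟨x, hx1, hx2⟩
        exfalso
        induction e1 with
        | _ a b =>
          induction e2 with
          | _ c d =>
            rw [SimpleGraph.mem_edgeSet] at he1 he2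
            rw [Sym2.mem_iff] at hx1 hx2
            rcases hx1 with rfl | rfl <;> rcases hx2 with rfl | rfl
            · by_cases hbd : b = d
              · subst hbd; exact hne rfl
              · exact hkey b d x hbd he1 he2
            · by_cases hbc : b = c
              · subst hbc; exact hne (Sym2.eq_swap ▸ rfl)
              · exact hkey b c x hbc he1 he2.symm
            · by_cases had : a = d
              · subst had; exact hne (Sym2.eq_swap ▸ rfl)
              · exact hkey a d x had he1.symm he2
            · by_cases hac : a = c
              · subst hac; exact hne rfl
              · exact hkey a c x hac he1.symm he2.symm
      · intro v hinj hadj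
        exact absurd (hadj 1) (fun h2 =>
          hkey (v 0) (v 2) (v 1) (fun h => by have := hinj h; simp at this)
            (hadj 0).symm h2)
      · intro v hinj hadj
        exact absurd (hadj 1) (fun h2 =>
          hkey (v 0) (v 2) (v 1) (fun h => by have := hinj h; simp at this)
            (hadj 0).symm h2)
    have := Nat.sInf_le hmem
    exact this
  · -- main case : Δ ≥ 2
    obtain ⟨r⟩ : Nonempty V := hT.isConnected.nonempty
    set KK := Δ + Δ / 2 with hKdef
    set P : V → V := StarTreeProof.parG hT r with hPdef
    set D : V → ℕ := StarTreeProof.depG hT r with hDdef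
    have HK : KK = Δ + Δ / 2 := rfl
    have hdep0 : D r = 0 := StarTreeProof.depG_root hT r
    have hdep : ∀ v, v ≠ r → D v = D (P v) + 1 := fun v hv => StarTreeProof.depG_parG hT hv
    have hadjP : ∀ v, v ≠ r → T.Adj v (P v) := fun v hv => StarTreeProof.adj_parG hT hv
    have hdich : ∀ {a b : V}, T.Adj a b → P a = b ∨ P b = a :=
      fun h => StarTreeProof.par_dichotomy hT r h
    have hchild : ∀ {a b : V}, T.Adj a b → D b ≤ D a → P a = b :=
      fun h hd => StarTreeProof.child_of_min hT r h hd
    have hner : ∀ {x y : V}, P x = y → x ≠ y → x ≠ r :=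
      fun hp hxy => StarTreeProof.ne_root_of_par hT hp hxy
    have hdeg : ∀ t, (StarTreeProof.ch r P t).card + (if t = r then 0 else 1) ≤ Δ := by
      intro t
      have hsub : ↑(StarTreeProof.ch r P t) ⊆ T.neighborSet t := by
        intro x hx
        rw [Finset.mem_coe, StarTreeProof.mem_ch] at hx
        have := hadjP x hx.1
        rw [hx.2] at this
        exact this.symm
      have hcard : (StarTreeProof.ch r P t).card = (↑(StarTreeProof.ch r P t) : Set V).ncard :=
        (Set.ncard_coe_finset _).symm
      by_cases htr : t = r
      · rw [if_pos htr]
        have := Set.ncard_le_ncard hsub (Set.toFinite _)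
        have := hΔle t
        omega
      · rw [if_neg htr]
        have hpadj : P t ∈ T.neighborSet t := hadjP t htr
        have hpnot : P t ∉ (↑(StarTreeProof.ch r P t) : Set V) := by
          rw [Finset.mem_coe, StarTreeProof.mem_ch]
          rintro ⟨h1, h2⟩
          have e1 := hdep t htr
          have e2 := hdep (P t) h1
          rw [h2] at e2
          omega
        have hins : (insert (P t) (↑(StarTreeProof.ch r P t) : Set V)).ncard =
            (↑(StarTreeProof.ch r P t) : Set V).ncard + 1 :=
          Set.ncard_insert_of_notMem hpnot (Set.toFinite _)
        have hsub2 : insert (P t) (↑(StarTreeProof.ch r P t) : Set V) ⊆ T.neighborSet t :=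
          Set.insert_subset hpadj hsub
        have := Set.ncard_le_ncard hsub2 (Set.toFinite _)
        have := hΔle t
        omega
    -- the coloring
    have hsym : ∀ a b : V, (if P a = b then StarTreeProof.cc KK Δ r P D a
        else if P b = a then StarTreeProof.cc KK Δ r P D b else 0)
        = (if P b = a then StarTreeProof.cc KK Δ r P D b
        else if P a = b then StarTreeProof.cc KK Δ r P D a else 0) := by
      intro a b
      by_cases h1 : P a = b <;> by_cases h2 : P b = a
      · by_cases hab : a = b
        · subst hab; rfl
        · exfalso
          have har : a ≠ r := hner h1 hab
          have hbr : b ≠ r := hner h2 (Ne.symm hab)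
          have e1 := hdep a har
          have e2 := hdep b hbr
          rw [h1] at e1
          rw [h2] at e2
          omega
      · rw [if_pos h1, if_neg h2, if_pos h1]
      · rw [if_neg h1, if_pos h2, if_pos h2]
      · rw [if_neg h1, if_neg h2, if_neg h2, if_neg h1]
    set colE : Sym2 V → ℕ := Sym2.lift ⟨fun a b => if P a = b then StarTreeProof.cc KK Δ r P D a
      else if P b = a then StarTreeProof.cc KK Δ r P D b else 0, hsym⟩ with hcoldef
    have hcolE : ∀ a b : V, b ≠ r → P b = a → colE s(a, b) = StarTreeProof.cc KK Δ r P D b := by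
      intro a b hb hpb
      rw [hcoldef]
      show (if P a = b then _ else if P b = a then _ else _) = _
      by_cases h1 : P a = b
      · exfalso
        by_cases hab : a = b
        · subst hab
          have := hdep a hb
          rw [hpb] at this
          omega
        · have har : a ≠ r := hner h1 hab
          have e1 := hdep a har
          have e2 := hdep b hb
          rw [h1] at e1
          rw [hpb] at e2
          omega
      · rw [if_neg h1, if_pos hpb]
    -- invariants
    have hinv := StarTreeProof.inv_all KK Δ r P D HK hΔ2 hdep0 hdep hdeg
    have hlt : ∀ e ∈ T.edgeSet, colE e < KK := by
      intro e he
      obtain ⟨b, hb, hbe⟩ := StarTreeProof.edge_form hT r he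
      rw [← hPdef] at hbe
      subst hbe
      rw [hcolE _ _ hb rfl]
      exact (hinv b).clt hb
    have hproper : ∀ e₁ ∈ T.edgeSet, ∀ e₂ ∈ T.edgeSet, e₁ ≠ e₂ →
        (∃ x, x ∈ e₁ ∧ x ∈ e₂) → colE e₁ ≠ colE e₂ := by
      rintro e1 he1 e2 he2 hne2 ⟨x, hx1, hx2⟩
      obtain ⟨b1, hb1, hbe1⟩ := StarTreeProof.edge_form hT r he1
      obtain ⟨b2, hb2, hbe2⟩ := StarTreeProof.edge_form hT r he2
      rw [← hPdef] at hbe1 hbe2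
      subst hbe1
      subst hbe2
      rw [hcolE _ _ hb1 rfl, hcolE _ _ hb2 rfl]
      have hbne : b1 ≠ b2 := by
        rintro rfl
        exact hne2 rfl
      rw [Sym2.mem_iff] at hx1 hx2
      rcases hx1 with h1 | h1 <;> rcases hx2 with h2 | h2
      · have hpp : P b1 = P b2 := by rw [← h1, ← h2]
        exact StarTreeProof.cc_sib_ne KK Δ r P D HK hΔ2 hdep0 hdep hdeg hb1 hb2 hbne hpp
      · have hp : P b1 = b2 := by rw [← h2]; exact h1.symm
        exact StarTreeProof.cc_child_ne KK Δ r P D HK hΔ2 hdep0 hdep hdeg hb1 hp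
      · have hp : P b2 = b1 := by rw [← h1]; exact h2.symm
        exact (StarTreeProof.cc_child_ne KK Δ r P D HK hΔ2 hdep0 hdep hdeg hb2 hp).symm
      · exact absurd (h1.symm.trans h2) hbne
    have hpath : ∀ v : Fin 5 → V, Function.Injective v →
        (∀ i : Fin 4, T.Adj (v i.castSucc) (v i.succ)) →
        3 ≤ (Finset.univ.image fun i : Fin 4 => colE s(v i.castSucc, v i.succ)).card := by
      intro v hinj hadj
      by_contra hcard
      push_neg at hcard
      have h01 : T.Adj (v 0) (v 1) := hadj 0
      have h12 : T.Adj (v 1) (v 2) := hadj 1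
      have h23 : T.Adj (v 2) (v 3) := hadj 2
      have h34 : T.Adj (v 3) (v 4) := hadj 3
      have hne : ∀ (i j : Fin 5), i ≠ j → v i ≠ v j := fun i j hij h => hij (hinj h)
      set S := (Finset.univ.image fun i : Fin 4 => colE s(v i.castSucc, v i.succ)) with hS
      have hm0 : colE s(v 0, v 1) ∈ S := Finset.mem_image.mpr ⟨0, Finset.mem_univ _, rfl⟩
      have hm1 : colE s(v 1, v 2) ∈ S := Finset.mem_image.mpr ⟨1, Finset.mem_univ _, rfl⟩
      have hm2 : colE s(v 2, v 3) ∈ S := Finset.mem_image.mpr ⟨2, Finset.mem_univ _, rfl⟩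
      have hm3 : colE s(v 3, v 4) ∈ S := Finset.mem_image.mpr ⟨3, Finset.mem_univ _, rfl⟩
      have hc01 : colE s(v 0, v 1) ≠ colE s(v 1, v 2) := by
        refine hproper _ h01 _ h12 ?_ ⟨v 1, by simp, by simp⟩
        intro h
        rw [Sym2.eq_iff] at h
        rcases h with ⟨h, -⟩ | ⟨h, -⟩
        · exact hne 0 1 (by decide) h
        · exact hne 0 2 (by decide) h
      have hc12 : colE s(v 1, v 2) ≠ colE s(v 2, v 3) := by
        refine hproper _ h12 _ h23 ?_ ⟨v 2, by simp, by simp⟩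
        intro h
        rw [Sym2.eq_iff] at h
        rcases h with ⟨h, -⟩ | ⟨h, -⟩
        · exact hne 1 2 (by decide) h
        · exact hne 1 3 (by decide) h
      have hc23 : colE s(v 2, v 3) ≠ colE s(v 3, v 4) := by
        refine hproper _ h23 _ h34 ?_ ⟨v 3, by simp, by simp⟩
        intro h
        rw [Sym2.eq_iff] at h
        rcases h with ⟨h, -⟩ | ⟨h, -⟩
        · exact hne 2 3 (by decide) h
        · exact hne 2 4 (by decide) h
      have hSeq : S = {colE s(v 0, v 1), colE s(v 1, v 2)} := by
        refine (Finset.eq_of_subset_of_card_le ?_ ?_).symm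
        · intro x hx
          rw [Finset.mem_insert, Finset.mem_singleton] at hx
          rcases hx with rfl | rfl
          · exact hm0
          · exact hm1
        · rw [Finset.card_pair hc01]; omega
      have hA : colE s(v 2, v 3) = colE s(v 0, v 1) := by
        rw [hSeq, Finset.mem_insert, Finset.mem_singleton] at hm2
        rcases hm2 with h | h
        · exact h
        · exact absurd h.symm hc12
      have hB : colE s(v 3, v 4) = colE s(v 1, v 2) := by
        rw [hSeq, Finset.mem_insert, Finset.mem_singleton] at hm3
        rcases hm3 with h | h
        · exact absurd (hA.trans h.symm) hc23
        · exact h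
      obtain ⟨m, -, hmin⟩ := Finset.exists_min_image Finset.univ
        (fun i : Fin 5 => D (v i)) ⟨0, Finset.mem_univ _⟩
      have hm' : ∀ i : Fin 5, D (v m) ≤ D (v i) := fun i => hmin i (Finset.mem_univ _)
      fin_cases m
      · -- top at v 0 : descending chain
        have p1 : P (v 1) = v 0 := hchild h01.symm (hm' 1)
        have p2 : P (v 2) = v 1 := by
          rcases hdich h12 with h | h
          · exact absurd (p1.symm.trans h) (hne 0 2 (by decide))
          · exact h
        have p3 : P (v 3) = v 2 := by
          rcases hdich h23 with h | h
          · exact absurd (p2.symm.trans h) (hne 1 3 (by decide))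
          · exact h
        have p4 : P (v 4) = v 3 := by
          rcases hdich h34 with h | h
          · exact absurd (p3.symm.trans h) (hne 2 4 (by decide))
          · exact h
        have hr1 : v 1 ≠ r := hner p1 (hne 1 0 (by decide))
        have hr2 : v 2 ≠ r := hner p2 (hne 2 1 (by decide))
        have hr3 : v 3 ≠ r := hner p3 (hne 3 2 (by decide))
        have hr4 : v 4 ≠ r := hner p4 (hne 4 3 (by decide))
        rw [hcolE (v 2) (v 3) hr3 p3, hcolE (v 0) (v 1) hr1 p1] at hA
        rw [hcolE (v 3) (v 4) hr4 p4, hcolE (v 1) (v 2) hr2 p2] at hB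
        refine absurd ?_ (StarTreeProof.starA KK Δ r P D HK hΔ2 hdep0 hdep hdeg
          (x := v 3) (z := v 4) hr3 (by rw [p3]; exact hr2)
          (Or.inr ⟨by rw [p3, p2]; exact hr1, by rw [p3, p2]; exact hA⟩) hr4 p4)
        rw [p3]; exact hB
      · -- top at v 1
        have p0 : P (v 0) = v 1 := hchild h01 (hm' 0)
        have p2 : P (v 2) = v 1 := hchild h12.symm (hm' 2)
        have p3 : P (v 3) = v 2 := by
          rcases hdich h23 with h | h
          · exact absurd (p2.symm.trans h) (hne 1 3 (by decide))
          · exact h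
        have p4 : P (v 4) = v 3 := by
          rcases hdich h34 with h | h
          · exact absurd (p3.symm.trans h) (hne 2 4 (by decide))
          · exact h
        have hr0 : v 0 ≠ r := hner p0 (hne 0 1 (by decide))
        have hr2 : v 2 ≠ r := hner p2 (hne 2 1 (by decide))
        have hr3 : v 3 ≠ r := hner p3 (hne 3 2 (by decide))
        have hr4 : v 4 ≠ r := hner p4 (hne 4 3 (by decide))
        rw [show s(v 0, v 1) = s(v 1, v 0) from Sym2.eq_swap] at hA
        rw [hcolE (v 2) (v 3) hr3 p3, hcolE (v 1) (v 0) hr0 p0] at hA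
        rw [hcolE (v 3) (v 4) hr4 p4, hcolE (v 1) (v 2) hr2 p2] at hB
        refine absurd ?_ (StarTreeProof.starA KK Δ r P D HK hΔ2 hdep0 hdep hdeg
          (x := v 3) (z := v 4) hr3 (by rw [p3]; exact hr2)
          (Or.inl ⟨v 0, hr0, by rw [p3, p2, p0], by rw [p3]; exact hne 0 2 (by decide),
            hA⟩) hr4 p4)
        rw [p3]; exact hB
      · -- top at v 2
        have p1 : P (v 1) = v 2 := hchild h12 (hm' 1)
        have p3 : P (v 3) = v 2 := hchild h23.symm (hm' 3)
        have p0 : P (v 0) = v 1 := by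
          rcases hdich h01 with h | h
          · exact h
          · exact absurd (p1.symm.trans h) (hne 2 0 (by decide))
        have p4 : P (v 4) = v 3 := by
          rcases hdich h34 with h | h
          · exact absurd (p3.symm.trans h) (hne 2 4 (by decide))
          · exact h
        have hr0 : v 0 ≠ r := hner p0 (hne 0 1 (by decide))
        have hr1 : v 1 ≠ r := hner p1 (hne 1 2 (by decide))
        have hr3 : v 3 ≠ r := hner p3 (hne 3 2 (by decide))
        have hr4 : v 4 ≠ r := hner p4 (hne 4 3 (by decide))
        rw [show s(v 0, v 1) = s(v 1, v 0) from Sym2.eq_swap] at hA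
        rw [hcolE (v 2) (v 3) hr3 p3, hcolE (v 1) (v 0) hr0 p0] at hA
        rw [show s(v 1, v 2) = s(v 2, v 1) from Sym2.eq_swap] at hB
        rw [hcolE (v 3) (v 4) hr4 p4, hcolE (v 2) (v 1) hr1 p1] at hB
        exact StarTreeProof.starB KK Δ r P D HK hΔ2 hdep0 hdep hdeg hr1 hr3
          (hne 1 3 (by decide)) (p1.trans p3.symm) hr0 p0 hr4 p4 hA.symm hB
      · -- top at v 3
        have p2 : P (v 2) = v 3 := hchild h23 (hm' 2)
        have p4 : P (v 4) = v 3 := hchild h34.symm (hm' 4)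
        have p1 : P (v 1) = v 2 := by
          rcases hdich h12 with h | h
          · exact h
          · exact absurd (p2.symm.trans h) (hne 3 1 (by decide))
        have p0 : P (v 0) = v 1 := by
          rcases hdich h01 with h | h
          · exact h
          · exact absurd (p1.symm.trans h) (hne 2 0 (by decide))
        have hr0 : v 0 ≠ r := hner p0 (hne 0 1 (by decide))
        have hr1 : v 1 ≠ r := hner p1 (hne 1 2 (by decide))
        have hr2 : v 2 ≠ r := hner p2 (hne 2 3 (by decide))
        have hr4 : v 4 ≠ r := hner p4 (hne 4 3 (by decide))
        rw [show s(v 0, v 1) = s(v 1, v 0) from Sym2.eq_swap,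
          show s(v 2, v 3) = s(v 3, v 2) from Sym2.eq_swap] at hA
        rw [hcolE (v 3) (v 2) hr2 p2, hcolE (v 1) (v 0) hr0 p0] at hA
        rw [show s(v 1, v 2) = s(v 2, v 1) from Sym2.eq_swap] at hB
        rw [hcolE (v 3) (v 4) hr4 p4, hcolE (v 2) (v 1) hr1 p1] at hB
        refine absurd ?_ (StarTreeProof.starA KK Δ r P D HK hΔ2 hdep0 hdep hdeg
          (x := v 1) (z := v 0) hr1 (by rw [p1]; exact hr2)
          (Or.inl ⟨v 4, hr4, by rw [p1, p2, p4], by rw [p1]; exact hne 4 2 (by decide),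
            hB.symm⟩) hr0 p0)
        rw [p1]; exact hA.symm
      · -- top at v 4 : ascending chain
        have p3 : P (v 3) = v 4 := hchild h34 (hm' 3)
        have p2 : P (v 2) = v 3 := by
          rcases hdich h23 with h | h
          · exact h
          · exact absurd (p3.symm.trans h) (hne 4 2 (by decide))
        have p1 : P (v 1) = v 2 := by
          rcases hdich h12 with h | h
          · exact h
          · exact absurd (p2.symm.trans h) (hne 3 1 (by decide))
        have p0 : P (v 0) = v 1 := by
          rcases hdich h01 with h | h
          · exact h
          · exact absurd (p1.symm.trans h) (hne 2 0 (by decide))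
        have hr0 : v 0 ≠ r := hner p0 (hne 0 1 (by decide))
        have hr1 : v 1 ≠ r := hner p1 (hne 1 2 (by decide))
        have hr2 : v 2 ≠ r := hner p2 (hne 2 3 (by decide))
        have hr3 : v 3 ≠ r := hner p3 (hne 3 4 (by decide))
        rw [show s(v 0, v 1) = s(v 1, v 0) from Sym2.eq_swap,
          show s(v 2, v 3) = s(v 3, v 2) from Sym2.eq_swap] at hA
        rw [hcolE (v 3) (v 2) hr2 p2, hcolE (v 1) (v 0) hr0 p0] at hA
        rw [show s(v 1, v 2) = s(v 2, v 1) from Sym2.eq_swap,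
          show s(v 3, v 4) = s(v 4, v 3) from Sym2.eq_swap] at hB
        rw [hcolE (v 4) (v 3) hr3 p3, hcolE (v 2) (v 1) hr1 p1] at hB
        refine absurd ?_ (StarTreeProof.starA KK Δ r P D HK hΔ2 hdep0 hdep hdeg
          (x := v 1) (z := v 0) hr1 (by rw [p1]; exact hr2)
          (Or.inr ⟨by rw [p1, p2]; exact hr3, by rw [p1, p2]; exact hB.symm⟩) hr0 p0)
        rw [p1]; exact hA.symm
    have hcyc : ∀ v : Fin 4 → V, Function.Injective v →
        (∀ i : Fin 4, T.Adj (v i) (v (i + 1))) →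
        3 ≤ (Finset.univ.image fun i : Fin 4 => colE s(v i, v (i + 1))).card := by
      intro v hinj hadj
      exfalso
      have h01 : T.Adj (v 0) (v 1) := hadj 0
      have h12 : T.Adj (v 1) (v 2) := hadj 1
      have h23 : T.Adj (v 2) (v 3) := hadj 2
      have h30 : T.Adj (v 3) (v 0) := hadj 3
      have hne : ∀ (i j : Fin 4), i ≠ j → v i ≠ v j := fun i j hij h => hij (hinj h)
      obtain ⟨m, -, hmax⟩ := Finset.exists_max_image Finset.univ
        (fun i : Fin 4 => D (v i)) ⟨0, Finset.mem_univ _⟩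
      have hm' : ∀ i : Fin 4, D (v i) ≤ D (v m) := fun i => hmax i (Finset.mem_univ _)
      fin_cases m
      · exact hne 1 3 (by decide)
          ((hchild h01 (hm' 1)).symm.trans (hchild h30.symm (hm' 3)))
      · exact hne 0 2 (by decide)
          ((hchild h01.symm (hm' 0)).symm.trans (hchild h12 (hm' 2)))
      · exact hne 1 3 (by decide)
          ((hchild h12.symm (hm' 1)).symm.trans (hchild h23 (hm' 3)))
      · exact hne 2 0 (by decide)
          ((hchild h23.symm (hm' 2)).symm.trans (hchild h30 (hm' 0)))
    have hmem : KK ∈ {k | ∃ c : Sym2 V → ℕ,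
        (∀ e ∈ T.edgeSet, c e < k) ∧ IsStarEdgeColoring T c} :=
      ⟨colE, hlt, hproper, hpath, hcyc⟩
    have h : starChromaticIndex T ≤ KK := Nat.sInf_le hmem
    omega
end

section
/- Let T be a tree with maximum degree Δ ≥ 1, rooted at a vertex r. Then there exists a star edge coloring φ of T using colors from {1, ..., ⌊3Δ/2⌋} such that for every non-root vertex v of T that is not a leaf, at least min(deg_T(v) − 1, ⌊Δ/2⌋) of the edges joining v to its children receive colors that do not appear on any edge incident to the parent of v. -/
open SimpleGraph

namespace StarTreeAux

open Finset

/-- the `i`-th smallest element of a finset of naturals (default 0 out of range). -/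
def nth (s : Finset ℕ) (i : ℕ) : ℕ := (s.sort (· ≤ ·)).getD i 0

lemma nth_mem {s : Finset ℕ} {i : ℕ} (h : i < s.card) : nth s i ∈ s := by
  have hl : i < (s.sort (· ≤ ·)).length := by rwa [Finset.length_sort]
  rw [nth, List.getD_eq_getElem _ _ hl]
  exact (Finset.mem_sort _).1 (List.getElem_mem hl)

lemma nth_inj {s : Finset ℕ} {i j : ℕ} (hi : i < s.card) (hj : j < s.card)
    (h : nth s i = nth s j) : i = j := by
  have hli : i < (s.sort (· ≤ ·)).length := by rwa [Finset.length_sort]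
  have hlj : j < (s.sort (· ≤ ·)).length := by rwa [Finset.length_sort]
  rw [nth, nth, List.getD_eq_getElem _ _ hli, List.getD_eq_getElem _ _ hlj] at h
  exact (List.Nodup.getElem_inj_iff (Finset.sort_nodup _ _)).1 h

variable {V : Type*} [Fintype V] [DecidableEq V]

/-- All the data of a rooted tree with degrees bounded by `Δ`. -/
structure Setup (V : Type*) [Fintype V] [DecidableEq V] where
  par : V → V
  r : V
  ι : V → ℕ
  Δ : ℕ
  dp : V → ℕ
  Hparr : par r = r
  Hdp : ∀ v, v ≠ r → dp (par v) + 1 = dp v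
  hι : Function.Injective ι
  HΔ : 1 ≤ Δ
  Hdeg : ∀ p : V, (Finset.univ.filter (fun z => par z = p ∧ z ≠ r)).card
      + (if p = r then 0 else 1) ≤ Δ

namespace Setup

variable (S : Setup V)

/-- children of `p` -/
def C (p : V) : Finset V := Finset.univ.filter (fun z => S.par z = p ∧ z ≠ S.r)

/-- number of children -/
def k (p : V) : ℕ := (S.C p).card

/-- degree -/
def deg (p : V) : ℕ := S.k p + (if p = S.r then 0 else 1)

lemma deg_le (p : V) : S.deg p ≤ S.Δ := S.Hdeg p

/-- position of `z` among its siblings -/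
def pos (z : V) : ℕ := ((S.C (S.par z)).filter (fun y => S.ι y < S.ι z)).card

/-- total number of colors -/
def L : ℕ := 3 * S.Δ / 2

/-- number of fresh colors guaranteed available at stage `p` -/
def avail (p : V) : ℕ := if p = S.r then S.L else S.L - S.deg (S.par p)

/-- number of children of `p` that get reused colors -/
def m (p : V) : ℕ := S.k p - S.avail p

/-- the tournament among siblings: `tour x y` means `x` may reuse the color of `y`'s edge. -/
def tour (x y : V) : Prop :=
  1 ≤ dd ∧ (dd ≤ (K - 1) / 2 ∨ (K % 2 = 0 ∧ dd = K / 2 ∧ S.pos x < K / 2))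
where
  K := S.k (S.par x)
  dd := if S.pos x ≤ S.pos y then S.pos y - S.pos x
        else S.pos y + S.k (S.par x) - S.pos x

instance tour.decidable (x y : V) : Decidable (S.tour x y) := by
  unfold tour; infer_instance

lemma mem_C {z p : V} : z ∈ S.C p ↔ S.par z = p ∧ z ≠ S.r := by simp [C]

lemma pos_lt {z p : V} (hz : z ∈ S.C p) : S.pos z < S.k p := by
  have hpz : S.par z = p := ((S.mem_C).1 hz).1
  apply Finset.card_lt_card
  rw [Finset.ssubset_iff_of_subset (by rw [hpz]; exact Finset.filter_subset _ _)]
  exact ⟨z, by rw [hpz] at *; simp [hz]⟩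

lemma pos_injOn {z z' p : V} (hz : z ∈ S.C p) (hz' : z' ∈ S.C p)
    (h : S.pos z = S.pos z') : z = z' := by
  by_contra hne
  have hpz : S.par z = p := ((S.mem_C).1 hz).1
  have hpz' : S.par z' = p := ((S.mem_C).1 hz').1
  have hιne : S.ι z ≠ S.ι z' := fun hh => hne (S.hι hh)
  unfold pos at h
  rw [hpz, hpz'] at h
  rcases hιne.lt_or_gt with hlt | hlt
  · have : (S.C p).filter (fun y => S.ι y < S.ι z) ⊂ (S.C p).filter (fun y => S.ι y < S.ι z') := by
      rw [Finset.ssubset_iff_of_subset (Finset.monotone_filter_right _ (fun y _ hy => hy.trans hlt))]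
      exact ⟨z, by simp [hz, hlt], by simp⟩
    exact absurd h (Finset.card_lt_card this).ne
  · have : (S.C p).filter (fun y => S.ι y < S.ι z') ⊂ (S.C p).filter (fun y => S.ι y < S.ι z) := by
      rw [Finset.ssubset_iff_of_subset (Finset.monotone_filter_right _ (fun y _ hy => hy.trans hlt))]
      exact ⟨z', by simp [hz', hlt], by simp⟩
    exact absurd h.symm (Finset.card_lt_card this).ne

lemma image_pos (p : V) : (S.C p).image S.pos = Finset.range (S.k p) := by
  apply Finset.eq_of_subset_of_card_le
  · intro j hj
    rw [Finset.mem_image] at hj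
    obtain ⟨z, hz, rfl⟩ := hj
    exact Finset.mem_range.2 (S.pos_lt hz)
  · rw [Finset.card_range, Finset.card_image_of_injOn (fun a ha b hb hab => S.pos_injOn ha hb hab)]
    rfl

lemma exists_pos_eq {p : V} {j : ℕ} (hj : j < S.k p) :
    ∃ z ∈ S.C p, S.pos z = j := by
  have := S.image_pos p
  have hj' : j ∈ (S.C p).image S.pos := by rw [this]; exact Finset.mem_range.2 hj
  rw [Finset.mem_image] at hj'
  obtain ⟨z, hz, hzz⟩ := hj'
  exact ⟨z, hz, hzz⟩

lemma card_newdes (p : V) :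
    ((S.C p).filter (fun z => S.m p ≤ S.pos z)).card = S.k p - S.m p := by
  classical
  have himg : ((S.C p).filter (fun z => S.m p ≤ S.pos z)).image S.pos
      = (Finset.range (S.k p)).filter (fun j => S.m p ≤ j) := by
    ext j
    simp only [Finset.mem_image, Finset.mem_filter, Finset.mem_range]
    constructor
    · rintro ⟨z, ⟨hz, hm⟩, rfl⟩
      exact ⟨S.pos_lt hz, hm⟩
    · rintro ⟨hj, hm⟩
      obtain ⟨z, hz, rfl⟩ := S.exists_pos_eq hj
      exact ⟨z, ⟨hz, hm⟩, rfl⟩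
  have hinj : Set.InjOn S.pos ((S.C p).filter (fun z => S.m p ≤ S.pos z)) := by
    intro a ha b hb hab
    exact S.pos_injOn (Finset.mem_of_mem_filter _ ha) (Finset.mem_of_mem_filter _ hb) hab
  have := Finset.card_image_of_injOn hinj
  rw [himg] at this
  rw [← this]
  have : (Finset.range (S.k p)).filter (fun j => S.m p ≤ j)
      = Finset.Ico (S.m p) (S.k p) := by
    ext j; simp [Finset.mem_filter, Finset.mem_range, Finset.mem_Ico, and_comm]
  rw [this, Nat.card_Ico]

lemma tour_irrefl (x : V) : ¬ S.tour x x := by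
  unfold tour tour.dd
  simp

lemma tour_antisymm {x y p : V} (hx : x ∈ S.C p) (hy : y ∈ S.C p) (hne : x ≠ y) :
    ¬ (S.tour x y ∧ S.tour y x) := by
  have hpx : S.par x = p := ((S.mem_C).1 hx).1
  have hpy : S.par y = p := ((S.mem_C).1 hy).1
  have hxlt : S.pos x < S.k p := S.pos_lt hx
  have hylt : S.pos y < S.k p := S.pos_lt hy
  have hposne : S.pos x ≠ S.pos y := fun hh => hne (S.pos_injOn hx hy hh)
  rintro ⟨ht1, ht2⟩
  unfold tour tour.dd tour.K at ht1 ht2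
  rw [hpx] at ht1
  rw [hpy] at ht2
  split_ifs at ht1 ht2 <;> omega

lemma card_tour {p g : V} (hp : p ∈ S.C g) :
    ((S.C g).filter (fun s => S.tour p s)).card =
      (S.k g - 1) / 2 + (if S.k g % 2 = 0 ∧ S.pos p < S.k g / 2 then 1 else 0) := by
  classical
  have hpg : S.par p = g := ((S.mem_C).1 hp).1
  set K := S.k g with hK
  set i := S.pos p with hi
  have hiK : i < K := S.pos_lt hp
  set Tg : Finset ℕ := Finset.Icc 1 ((K - 1) / 2) ∪
      (if K % 2 = 0 ∧ i < K / 2 then {K / 2} else ∅) with hTg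
  have hTgcard : Tg.card = (K - 1) / 2 + (if K % 2 = 0 ∧ i < K / 2 then 1 else 0) := by
    rw [hTg]
    split_ifs with hc
    · rw [Finset.card_union_of_disjoint (by
        simp only [Finset.disjoint_singleton_right, Finset.mem_Icc]
        omega)]
      simp
    · simp
  rw [← hTgcard]
  apply Finset.card_bij (fun s _ => if i ≤ S.pos s then S.pos s - i else S.pos s + K - i)
  · intro s hs
    obtain ⟨hsC, hts⟩ := Finset.mem_filter.1 hs
    unfold tour tour.dd tour.K at hts
    rw [hpg, ← hK, ← hi] at hts
    obtain ⟨ht1, ht2⟩ := hts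
    rw [hTg]
    rcases ht2 with h | h
    · exact Finset.mem_union_left _ (Finset.mem_Icc.2 ⟨ht1, h⟩)
    · apply Finset.mem_union_right
      rw [if_pos ⟨h.1, h.2.2⟩]
      simp [h.2.1]
  · intro a ha b hb hab
    rw [Finset.mem_filter] at ha hb
    have hal : S.pos a < K := S.pos_lt ha.1
    have hbl : S.pos b < K := S.pos_lt hb.1
    have : S.pos a = S.pos b := by split_ifs at hab <;> omega
    exact S.pos_injOn ha.1 hb.1 this
  · intro d hd
    rw [hTg, Finset.mem_union, Finset.mem_Icc] at hd
    have hd1 : 1 ≤ d ∧ (d ≤ (K - 1) / 2 ∨ (K % 2 = 0 ∧ d = K / 2 ∧ i < K / 2)) := by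
      rcases hd with h | h
      · exact ⟨h.1, Or.inl h.2⟩
      · split_ifs at h with hc
        · simp only [Finset.mem_singleton] at h
          subst h
          exact ⟨by omega, Or.inr ⟨hc.1, rfl, hc.2⟩⟩
        · simp at h
    have hdK : 1 ≤ d ∧ d ≤ K - 1 := by
      rcases hd1.2 with h | h <;> omega
    set j := if i + d < K then i + d else i + d - K with hj
    have hjK : j < K := by rw [hj]; split_ifs <;> omega
    obtain ⟨s, hsC, hsj⟩ := S.exists_pos_eq hjK
    have hdd : (if i ≤ S.pos s then S.pos s - i else S.pos s + K - i) = d := by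
      rw [hsj, hj]; split_ifs <;> omega
    refine ⟨s, ?_, hdd⟩
    rw [Finset.mem_filter]
    refine ⟨hsC, ?_⟩
    unfold tour tour.dd tour.K
    rw [hpg, ← hK, ← hi, hdd]
    exact hd1

/-- The coloring: `assign p z` is the color of the edge from `p` to its child `z`. -/
noncomputable def assign (p : V) : V → ℕ :=
  if hp : p = S.r then fun z => nth (Finset.Icc 1 S.L) (S.pos z)
  else
    fun z =>
      if S.m p ≤ S.pos z then
        nth ((Finset.Icc 1 S.L) \
          (((S.C (S.par p)).image (assign (S.par p))) ∪
            (if S.par p = S.r then ∅ else {assign (S.par (S.par p)) (S.par p)})))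
          (S.pos z - S.m p)
      else
        nth ((((S.C (S.par p)).filter (fun s => S.tour p s)).image (assign (S.par p))) ∪
            (if S.par p = S.r then ∅
             else if S.m (S.par p) ≤ S.pos p then
               {assign (S.par (S.par p)) (S.par p)} else ∅))
          (S.pos z)
termination_by S.dp p
decreasing_by
  all_goals first
    | (have := S.Hdp p hp; omega)
    | (by_cases hg : S.par p = S.r
       · have h1 := S.Hdp p hp; rw [hg] at h1; rw [hg, S.Hparr]; omega
       · have := S.Hdp p hp; have := S.Hdp (S.par p) hg; omega)

/-- the set of colors appearing on edges incident with `g`. -/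
noncomputable def colorsAt (g : V) : Finset ℕ :=
  ((S.C g).image (S.assign g)) ∪
    (if g = S.r then ∅ else {S.assign (S.par g) g})

/-- the pool of reusable colors for the children of `p`. -/
noncomputable def pool (p : V) : Finset ℕ :=
  (((S.C (S.par p)).filter (fun s => S.tour p s)).image (S.assign (S.par p))) ∪
    (if S.par p = S.r then ∅
     else if S.m (S.par p) ≤ S.pos p then {S.assign (S.par (S.par p)) (S.par p)} else ∅)

lemma assign_root (z : V) :
    S.assign S.r z = nth (Finset.Icc 1 S.L) (S.pos z) := by
  rw [assign]
  simp

lemma assign_ne {p : V} (hp : p ≠ S.r) (z : V) :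
    S.assign p z =
      if S.m p ≤ S.pos z then
        nth ((Finset.Icc 1 S.L) \ S.colorsAt (S.par p)) (S.pos z - S.m p)
      else nth (S.pool p) (S.pos z) := by
  rw [assign, dif_neg hp]
  rfl


lemma self_mem_C {p : V} (hp : p ≠ S.r) : p ∈ S.C (S.par p) := S.mem_C.2 ⟨rfl, hp⟩

lemma mem_colorsAt_child {g z : V} (hz : z ∈ S.C g) : S.assign g z ∈ S.colorsAt g :=
  Finset.mem_union_left _ (Finset.mem_image_of_mem _ hz)

lemma mem_colorsAt_par {g : V} (hg : g ≠ S.r) : S.assign (S.par g) g ∈ S.colorsAt g := by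
  apply Finset.mem_union_right
  rw [if_neg hg]
  exact Finset.mem_singleton_self _

lemma card_colorsAt_le (g : V) : (S.colorsAt g).card ≤ S.deg g := by
  unfold colorsAt deg
  refine le_trans (Finset.card_union_le _ _) ?_
  gcongr
  · exact le_trans (Finset.card_image_le) le_rfl
  · split_ifs <;> simp

lemma pool_subset_colorsAt {p : V} : S.pool p ⊆ S.colorsAt (S.par p) := by
  unfold pool colorsAt
  intro x hx
  rcases Finset.mem_union.1 hx with hx | hx
  · apply Finset.mem_union_left
    exact Finset.image_subset_image (Finset.filter_subset _ _) hx
  · apply Finset.mem_union_right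
    split_ifs at hx ⊢ <;> simp_all

/-- The inductive invariant at vertex `p`. -/
structure GoodAt (S : Setup V) (p : V) : Prop where
  mem_Icc : ∀ z ∈ S.C p, S.assign p z ∈ Finset.Icc 1 S.L
  inj : ∀ z ∈ S.C p, ∀ z' ∈ S.C p, S.assign p z = S.assign p z' → z = z'
  ne_par : p ≠ S.r → ∀ z ∈ S.C p, S.assign p z ≠ S.assign (S.par p) p
  fresh : p ≠ S.r → ∀ z ∈ S.C p, S.m p ≤ S.pos z → S.assign p z ∉ S.colorsAt (S.par p)
  reused : p ≠ S.r → ∀ z ∈ S.C p, ¬ S.m p ≤ S.pos z →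
     (∃ s ∈ S.C (S.par p), S.tour p s ∧ S.assign p z = S.assign (S.par p) s) ∨
     (S.m (S.par p) ≤ S.pos p ∧ S.par p ≠ S.r ∧ S.assign p z = S.assign (S.par (S.par p)) (S.par p))

lemma colorsAt_subset_Icc {g : V} (hGg : S.GoodAt g) (hGgg : S.GoodAt (S.par g)) :
    S.colorsAt g ⊆ Finset.Icc 1 S.L := by
  unfold colorsAt
  intro x hx
  rcases Finset.mem_union.1 hx with hx | hx
  · obtain ⟨z, hz, rfl⟩ := Finset.mem_image.1 hx
    exact hGg.mem_Icc z hz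
  · split_ifs at hx with hgr
    · simp at hx
    · rw [Finset.mem_singleton] at hx
      subst hx
      exact hGgg.mem_Icc g (S.self_mem_C hgr)

lemma LΔ : S.L = 3 * S.Δ / 2 := rfl

lemma avail_le_A {p : V} (hp : p ≠ S.r) :
    S.avail p ≤ ((Finset.Icc 1 S.L) \ S.colorsAt (S.par p)).card := by
  have h1 : (Finset.Icc 1 S.L).card = S.L := by rw [Nat.card_Icc]; omega
  have h2 := Finset.le_card_sdiff (S.colorsAt (S.par p)) (Finset.Icc 1 S.L)
  have h3 := S.card_colorsAt_le (S.par p)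
  have h4 : S.avail p = S.L - S.deg (S.par p) := by unfold avail; rw [if_neg hp]
  omega

lemma pool_card {p : V} (hp : p ≠ S.r) (hGg : S.GoodAt (S.par p)) :
    S.m p ≤ (S.pool p).card := by
  classical
  set g := S.par p with hg
  have hpC : p ∈ S.C g := S.self_mem_C hp
  have himgcard : (((S.C g).filter (fun s => S.tour p s)).image (S.assign g)).card
      = (S.k g - 1) / 2 + (if S.k g % 2 = 0 ∧ S.pos p < S.k g / 2 then 1 else 0) := by
    rw [Finset.card_image_of_injOn (fun a ha b hb hab =>
      hGg.inj a (Finset.mem_of_mem_filter _ ha) b (Finset.mem_of_mem_filter _ hb) hab),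
      S.card_tour hpC]
  have hdegp := S.deg_le p
  have hdegg := S.deg_le g
  have hposp : S.pos p < S.k g := S.pos_lt hpC
  have hmp : S.m p = S.k p - (S.L - S.deg g) := by
    unfold m avail; rw [if_neg hp]
  have hdegp' : S.deg p = S.k p + 1 := by unfold deg; rw [if_neg hp]
  have hL := S.LΔ
  by_cases hgr : g = S.r
  · have hpool : S.pool p = ((S.C g).filter (fun s => S.tour p s)).image (S.assign g) := by
      unfold pool
      rw [← hg, if_pos hgr, Finset.union_empty]
    have hdegg' : S.deg g = S.k g := by unfold deg; rw [if_pos hgr]; omega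
    rw [hpool, himgcard]
    split_ifs with hc
    · omega
    · omega
  · have hdegg' : S.deg g = S.k g + 1 := by unfold deg; rw [if_neg hgr]
    by_cases hnd : S.m g ≤ S.pos p
    · have hpool : S.pool p = (((S.C g).filter (fun s => S.tour p s)).image (S.assign g)) ∪
          {S.assign (S.par g) g} := by
        unfold pool
        rw [← hg, if_neg hgr, if_pos hnd]
      have hdisj : Disjoint (((S.C g).filter (fun s => S.tour p s)).image (S.assign g))
          {S.assign (S.par g) g} := by
        rw [Finset.disjoint_singleton_right]
        intro hmem
        obtain ⟨s, hs, heq⟩ := Finset.mem_image.1 hmem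
        exact hGg.ne_par hgr s (Finset.mem_of_mem_filter _ hs) heq
      rw [hpool, Finset.card_union_of_disjoint hdisj, himgcard, Finset.card_singleton]
      split_ifs with hc
      · omega
      · omega
    · have hpool : S.pool p = ((S.C g).filter (fun s => S.tour p s)).image (S.assign g) := by
        unfold pool
        rw [← hg, if_neg hgr, if_neg hnd, Finset.union_empty]
      have hmg : S.m g = S.k g - (S.L - S.deg (S.par g)) := by
        unfold m avail; rw [if_neg hgr]
      have hdeggg := S.deg_le (S.par g)
      rw [hpool, himgcard]
      split_ifs with hc
      · omega
      · omega

theorem good_all (p : V) : S.GoodAt p := by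
  classical
  suffices H : ∀ n q, S.dp q = n → S.GoodAt q by exact H _ p rfl
  intro n
  induction n using Nat.strong_induction_on with
  | _ n IH =>
  intro p hn
  by_cases hp : p = S.r
  · subst hp
    have hdegr := S.deg_le S.r
    have hkL : S.k S.r ≤ S.L := by
      unfold deg at hdegr; rw [if_pos rfl] at hdegr
      have := S.LΔ; omega
    have hc : (Finset.Icc 1 S.L).card = S.L := by rw [Nat.card_Icc]; omega
    constructor
    · intro z hz
      rw [S.assign_root]
      apply nth_mem
      have := S.pos_lt hz; omega
    · intro z hz z' hz' heq
      rw [S.assign_root, S.assign_root] at heq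
      apply S.pos_injOn hz hz'
      exact nth_inj (by have := S.pos_lt hz; omega) (by have := S.pos_lt hz'; omega) heq
    · intro h; exact absurd rfl h
    · intro h; exact absurd rfl h
    · intro h; exact absurd rfl h
  · set g := S.par p with hg
    have hdpg : S.dp g + 1 = S.dp p := S.Hdp p hp
    have hGg : S.GoodAt g := IH (S.dp g) (by omega) g rfl
    have hGgg : S.GoodAt (S.par g) := by
      by_cases hgr : g = S.r
      · rw [hgr, S.Hparr]; rw [hgr] at hGg; exact hGg
      · exact IH (S.dp (S.par g)) (by have := S.Hdp g hgr; omega) _ rfl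
    have hpC : p ∈ S.C g := S.self_mem_C hp
    have hCA : S.colorsAt g ⊆ Finset.Icc 1 S.L := S.colorsAt_subset_Icc hGg hGgg
    have hA : S.avail p ≤ ((Finset.Icc 1 S.L) \ S.colorsAt g).card := S.avail_le_A hp
    have hpoolcard : S.m p ≤ (S.pool p).card := S.pool_card hp hGg
    have hAdisj : ∀ x ∈ (Finset.Icc 1 S.L) \ S.colorsAt g, x ∉ S.pool p := by
      intro x hx hxp
      exact (Finset.mem_sdiff.1 hx).2 (S.pool_subset_colorsAt hxp)
    have hsum : S.k p ≤ S.m p + S.avail p := by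
      have hmm : S.m p = S.k p - S.avail p := rfl
      rw [hmm]
      exact le_tsub_add
    have hknew : S.k p ≤ S.m p + ((Finset.Icc 1 S.L) \ S.colorsAt g).card :=
      hsum.trans (Nat.add_le_add_left hA _)
    have hidxA : ∀ z ∈ S.C p, S.m p ≤ S.pos z →
        S.pos z - S.m p < ((Finset.Icc 1 S.L) \ S.colorsAt g).card := by
      intro z hz hm
      have := S.pos_lt hz
      omega
    constructor
    · intro z hz
      rw [S.assign_ne hp z]
      split_ifs with hnd
      · exact (Finset.mem_sdiff.1 (nth_mem (hidxA z hz hnd))).1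
      · refine hCA (S.pool_subset_colorsAt (nth_mem ?_))
        have := S.pos_lt hz
        omega
    · intro z hz z' hz' heq
      rw [S.assign_ne hp z, S.assign_ne hp z'] at heq
      have hzlt := S.pos_lt hz
      have hz'lt := S.pos_lt hz'
      split_ifs at heq with h1 h2 h2
      · apply S.pos_injOn hz hz'
        have := nth_inj (hidxA z hz h1) (hidxA z' hz' h2) heq
        omega
      · exact absurd (S.pool_subset_colorsAt (heq ▸ nth_mem (by omega)))
          (Finset.mem_sdiff.1 (nth_mem (hidxA z hz h1))).2
      · exact absurd (S.pool_subset_colorsAt (heq ▸ nth_mem (by omega) : _ ∈ S.pool p))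
          (Finset.mem_sdiff.1 (nth_mem (hidxA z' hz' h2))).2
      · apply S.pos_injOn hz hz'
        exact nth_inj (by omega) (by omega) heq
    · intro _ z hz
      rw [S.assign_ne hp z]
      have hzlt := S.pos_lt hz
      split_ifs with hnd
      · intro heq
        exact (Finset.mem_sdiff.1 (nth_mem (hidxA z hz hnd))).2 (heq ▸ S.mem_colorsAt_child hpC)
      · intro heq
        have hmem : S.assign g p ∈ S.pool p := heq ▸ nth_mem (by omega)
        rcases Finset.mem_union.1 hmem with hx | hx
        · obtain ⟨s, hsf, hseq⟩ := Finset.mem_image.1 hx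
          obtain ⟨hsC, hts⟩ := Finset.mem_filter.1 hsf
          have : s = p := hGg.inj s hsC p hpC hseq
          subst this
          exact S.tour_irrefl s hts
        · rw [← hg] at hx
          split_ifs at hx with hgr hnd2
          · simp at hx
          · rw [Finset.mem_singleton] at hx
            exact hGg.ne_par hgr p hpC hx
          · simp at hx
    · intro _ z hz hnd
      rw [S.assign_ne hp z, if_pos hnd]
      exact (Finset.mem_sdiff.1 (nth_mem (hidxA z hz hnd))).2
    · intro _ z hz hnd
      rw [S.assign_ne hp z, if_neg hnd]
      have hzlt := S.pos_lt hz
      have hmem : nth (S.pool p) (S.pos z) ∈ S.pool p := nth_mem (by omega)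
      rcases Finset.mem_union.1 hmem with hx | hx
      · obtain ⟨s, hsf, hseq⟩ := Finset.mem_image.1 hx
        obtain ⟨hsC, hts⟩ := Finset.mem_filter.1 hsf
        exact Or.inl ⟨s, hsC, hts, hseq.symm⟩
      · rw [← hg] at hx
        split_ifs at hx with hgr hnd2
        · simp at hx
        · rw [Finset.mem_singleton] at hx
          exact Or.inr ⟨hnd2, hgr, hx⟩
        · simp at hx

lemma ne_root_of_par {x y : V} (hxy : S.par x = y) (h : x ≠ y) : x ≠ S.r := by
  intro hr
  apply h
  rw [hr] at hxy ⊢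
  rw [S.Hparr] at hxy
  exact hxy

lemma echar {b a : V} (hb : b ≠ S.r) (ha : a ∈ S.C b) :
    S.assign b a ∉ S.colorsAt (S.par b) ∨
    (∃ s ∈ S.C (S.par b), S.tour b s ∧ S.assign b a = S.assign (S.par b) s) ∨
    (S.m (S.par b) ≤ S.pos b ∧ S.par b ≠ S.r ∧
      S.assign b a = S.assign (S.par (S.par b)) (S.par b)) := by
  by_cases hnd : S.m b ≤ S.pos a
  · exact Or.inl ((S.good_all b).fresh hb a ha hnd)
  · exact Or.inr ((S.good_all b).reused hb a ha hnd)

lemma star_mono {a b c d e : V} (hab : S.par a = b) (hbc : S.par b = c) (hcd : S.par c = d)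
    (hde : S.par d = e) (h1 : a ≠ b) (h2 : b ≠ c) (h3 : c ≠ d) (h4 : d ≠ e) :
    ¬ (S.assign d c = S.assign b a ∧ S.assign e d = S.assign c b) := by
  have har := S.ne_root_of_par hab h1
  have hbr := S.ne_root_of_par hbc h2
  have hcr := S.ne_root_of_par hcd h3
  have hdr := S.ne_root_of_par hde h4
  have haCb : a ∈ S.C b := S.mem_C.2 ⟨hab, har⟩
  have hbCc : b ∈ S.C c := S.mem_C.2 ⟨hbc, hbr⟩
  rintro ⟨hh1, hh2⟩
  rcases S.echar hbr haCb with hnew | ⟨s, hsC, hts, heq⟩ | ⟨hnd, hgr, heq⟩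
  · apply hnew
    rw [hbc, ← hh1]
    have := S.mem_colorsAt_par hcr
    rw [hcd] at this
    exact this
  · rw [hbc] at heq hsC
    have hne := (S.good_all c).ne_par hcr s hsC
    rw [hcd] at hne
    exact hne (by rw [← heq, ← hh1])
  · rw [hbc] at hnd
    have hfr := (S.good_all c).fresh hcr b hbCc hnd
    rw [hcd] at hfr
    apply hfr
    rw [← hh2]
    have := S.mem_colorsAt_par hdr
    rw [hde] at this
    exact this

lemma star_apex1 {a b c d e : V} (hab : S.par a = b) (hcb : S.par c = b) (hdc : S.par d = c)
    (hed : S.par e = d) (h1 : a ≠ b) (h2 : c ≠ b) (h3 : d ≠ c) (h4 : e ≠ d) :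
    ¬ (S.assign c d = S.assign b a ∧ S.assign d e = S.assign b c) := by
  have har := S.ne_root_of_par hab h1
  have hcr := S.ne_root_of_par hcb h2
  have hdr := S.ne_root_of_par hdc h3
  have haCb : a ∈ S.C b := S.mem_C.2 ⟨hab, har⟩
  have hdCc : d ∈ S.C c := S.mem_C.2 ⟨hdc, hdr⟩
  have heCd : e ∈ S.C d := S.mem_C.2 ⟨hed, S.ne_root_of_par hed h4⟩
  rintro ⟨hh1, hh2⟩
  have hmem : S.assign c d ∈ S.colorsAt b := by
    rw [hh1]; exact S.mem_colorsAt_child haCb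
  have hnnd : ¬ S.m c ≤ S.pos d := by
    intro h
    have := (S.good_all c).fresh hcr d hdCc h
    rw [hcb] at this
    exact this hmem
  rcases S.echar hdr heCd with hnew | ⟨s, hsC, hts, heq⟩ | ⟨hnd, hgr, heq⟩
  · apply hnew
    rw [hdc, hh2, ← hcb]
    exact S.mem_colorsAt_par hcr
  · rw [hdc] at heq hsC
    have hne := (S.good_all c).ne_par hcr s hsC
    rw [hcb] at hne
    exact hne (by rw [← heq, hh2])
  · rw [hdc] at hnd
    exact hnnd hnd

lemma star_apex2 {a b c d e : V} (hab : S.par a = b) (hbc : S.par b = c) (hdc : S.par d = c)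
    (hed : S.par e = d) (h1 : a ≠ b) (h2 : b ≠ c) (h3 : d ≠ c) (h4 : e ≠ d) (hbd : b ≠ d) :
    ¬ (S.assign b a = S.assign c d ∧ S.assign c b = S.assign d e) := by
  have har := S.ne_root_of_par hab h1
  have hbr := S.ne_root_of_par hbc h2
  have hdr := S.ne_root_of_par hdc h3
  have haCb : a ∈ S.C b := S.mem_C.2 ⟨hab, har⟩
  have hbCc : b ∈ S.C c := S.mem_C.2 ⟨hbc, hbr⟩
  have hdCc : d ∈ S.C c := S.mem_C.2 ⟨hdc, hdr⟩
  have heCd : e ∈ S.C d := S.mem_C.2 ⟨hed, S.ne_root_of_par hed h4⟩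
  rintro ⟨hh1, hh2⟩
  have htbd : S.tour b d := by
    rcases S.echar hbr haCb with hnew | ⟨s, hsC, hts, heq⟩ | ⟨hnd, hgr, heq⟩
    · exact absurd (by rw [hbc, hh1]; exact S.mem_colorsAt_child hdCc) hnew
    · rw [hbc] at heq hsC
      have : s = d := (S.good_all c).inj s hsC d hdCc (by rw [← heq, hh1])
      subst this
      exact hts
    · exfalso
      rw [hbc] at heq hgr
      have hne := (S.good_all c).ne_par hgr d hdCc
      exact hne (by rw [← hh1, heq])
  have htdb : S.tour d b := by
    rcases S.echar hdr heCd with hnew | ⟨s, hsC, hts, heq⟩ | ⟨hnd, hgr, heq⟩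
    · exact absurd (by rw [hdc, ← hh2]; exact S.mem_colorsAt_child hbCc) hnew
    · rw [hdc] at heq hsC
      have : s = b := (S.good_all c).inj s hsC b hbCc (by rw [← heq, ← hh2])
      subst this
      exact hts
    · exfalso
      rw [hdc] at heq hgr
      have hne := (S.good_all c).ne_par hgr b hbCc
      exact hne (by rw [hh2, heq])
  exact S.tour_antisymm hbCc hdCc hbd ⟨htbd, htdb⟩

end Setup

section Graph

open SimpleGraph

variable {V : Type*} [Fintype V] [DecidableEq V] {T : SimpleGraph V}

lemma three_le_card_image {f : Fin 4 → ℕ} (h01 : f 0 ≠ f 1) (h12 : f 1 ≠ f 2) (h23 : f 2 ≠ f 3)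
    (hno : ¬ (f 0 = f 2 ∧ f 1 = f 3)) : 3 ≤ (Finset.univ.image f).card := by
  classical
  by_cases h02 : f 0 = f 2
  · have h13 : f 1 ≠ f 3 := fun h => hno ⟨h02, h⟩
    have h03 : f 0 ≠ f 3 := by rw [h02]; exact h23
    have : ({f 0, f 1, f 3} : Finset ℕ).card = 3 := by
      rw [Finset.card_insert_of_notMem (by simp [h01, h03]),
        Finset.card_insert_of_notMem (by simp [h13]), Finset.card_singleton]
    rw [← this]
    refine Finset.card_le_card ?_
    intro x hx
    simp only [Finset.mem_insert, Finset.mem_singleton] at hx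
    rcases hx with rfl | rfl | rfl <;> exact Finset.mem_image_of_mem f (Finset.mem_univ _)
  · have : ({f 0, f 1, f 2} : Finset ℕ).card = 3 := by
      rw [Finset.card_insert_of_notMem (by simp [h01, h02]),
        Finset.card_insert_of_notMem (by simp [h12]), Finset.card_singleton]
    rw [← this]
    refine Finset.card_le_card ?_
    intro x hx
    simp only [Finset.mem_insert, Finset.mem_singleton] at hx
    rcases hx with rfl | rfl | rfl <;> exact Finset.mem_image_of_mem f (Finset.mem_univ _)

lemma dist_ne_of_adj (hT : T.IsTree) (r : V) {a b : V} (hadj : T.Adj a b) :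
    T.dist a r ≠ T.dist b r := by
  intro heq
  obtain ⟨q, hqp, hql⟩ := hT.isConnected.exists_path_of_dist b r
  have hanotin : a ∉ q.support := by
    intro hin
    have hspec := q.take_spec hin
    have hlen : (q.takeUntil a hin).length + (q.dropUntil a hin).length = q.length := by
      rw [← SimpleGraph.Walk.length_append, hspec]
    have htpos : (q.takeUntil a hin).length ≠ 0 := by
      intro h0
      exact hadj.ne' (SimpleGraph.Walk.eq_of_length_eq_zero h0)
    have hdistle := SimpleGraph.dist_le (q.dropUntil a hin)
    omega
  obtain ⟨w, hwp, hwl⟩ := hT.isConnected.exists_path_of_dist a r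
  have hcons : (SimpleGraph.Walk.cons hadj q).IsPath := hqp.cons hanotin
  have huniq := hT.IsAcyclic.path_unique ⟨w, hwp⟩ ⟨_, hcons⟩
  have hww : w = SimpleGraph.Walk.cons hadj q := congrArg Subtype.val huniq
  have : w.length = q.length + 1 := by rw [hww, SimpleGraph.Walk.length_cons]
  omega

lemma exists_parent (hT : T.IsTree) (r : V) {v : V} (hv : v ≠ r) :
    ∃ p, T.Adj v p ∧ T.dist p r + 1 = T.dist v r := by
  have hd : T.dist v r ≠ 0 := by
    rw [SimpleGraph.dist_ne_zero_iff_ne_and_reachable]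
    exact ⟨hv, hT.isConnected.preconnected v r⟩
  obtain ⟨w, hwp, hwl⟩ := hT.isConnected.exists_path_of_dist v r
  cases w with
  | nil => rw [SimpleGraph.Walk.length_nil] at hwl; omega
  | @cons _ x _ hvx q =>
    refine ⟨x, hvx, ?_⟩
    rw [SimpleGraph.Walk.length_cons] at hwl
    have h1 : T.dist x r ≤ q.length := SimpleGraph.dist_le q
    have h2 : T.dist v r ≤ T.dist v x + T.dist x r := hT.isConnected.dist_triangle
    have h3 : T.dist v x = 1 := SimpleGraph.dist_eq_one_iff_adj.2 hvx
    omega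

lemma parent_unique (hT : T.IsTree) (r : V) {v p p' : V} (h1 : T.Adj v p)
    (h2 : T.dist p r + 1 = T.dist v r) (h3 : T.Adj v p')
    (h4 : T.dist p' r + 1 = T.dist v r) : p = p' := by
  obtain ⟨q, hqp, hql⟩ := hT.isConnected.exists_path_of_dist p r
  obtain ⟨q', hqp', hql'⟩ := hT.isConnected.exists_path_of_dist p' r
  have hnotin : v ∉ q.support := by
    intro hin
    have := SimpleGraph.dist_le (q.dropUntil v hin)
    have hle := SimpleGraph.Walk.length_dropUntil_le q hin
    omega
  have hnotin' : v ∉ q'.support := by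
    intro hin
    have := SimpleGraph.dist_le (q'.dropUntil v hin)
    have hle := SimpleGraph.Walk.length_dropUntil_le q' hin
    omega
  have hP : (SimpleGraph.Walk.cons h1 q).IsPath := hqp.cons hnotin
  have hP' : (SimpleGraph.Walk.cons h3 q').IsPath := hqp'.cons hnotin'
  have huniq := hT.IsAcyclic.path_unique ⟨_, hP⟩ ⟨_, hP'⟩
  have hww : SimpleGraph.Walk.cons h1 q = SimpleGraph.Walk.cons h3 q' :=
    congrArg Subtype.val huniq
  have := congrArg (fun z : T.Walk v r => z.getVert 1) hww
  simpa using this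

end Graph

end StarTreeAux

/-- Let `T` be a tree with maximum degree `Δ ≥ 1`, rooted at `r`.
Then `T` has a star edge coloring with colors from `{1, …, ⌊3Δ/2⌋}` such that for
every non-root non-leaf vertex `v` with parent `p` (the neighbor of `v` closer to
the root), at least `min (deg v − 1) ⌊Δ/2⌋` of the edges from `v` to its children
(the neighbors of `v` farther from the root) receive colors that do not appear on
any edge incident to `p`. -/
theorem exists_star_edge_coloring_rooted_tree {V : Type*} [Fintype V]
    (T : SimpleGraph V) (hT : T.IsTree) (Δ : ℕ) (hΔpos : 1 ≤ Δ)
    (hΔle : ∀ v : V, (T.neighborSet v).ncard ≤ Δ)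
    (hΔmax : ∃ v : V, (T.neighborSet v).ncard = Δ)
    (r : V) :
    ∃ c : Sym2 V → ℕ,
      (∀ e ∈ T.edgeSet, 1 ≤ c e ∧ c e ≤ 3 * Δ / 2) ∧
      IsStarEdgeColoring T c ∧
      ∀ v p : V, v ≠ r → (T.neighborSet v).ncard ≠ 1 →
        T.Adj v p → T.dist p r + 1 = T.dist v r →
        min ((T.neighborSet v).ncard - 1) (Δ / 2) ≤
          ({w | T.Adj v w ∧ T.dist w r = T.dist v r + 1 ∧
              ∀ u : V, T.Adj p u → c s(p, u) ≠ c s(v, w)}).ncard := by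
  classical
  have hex : ∀ v : V, v ≠ r → ∃ p, T.Adj v p ∧ T.dist p r + 1 = T.dist v r :=
    fun v hv => StarTreeAux.exists_parent hT r hv
  set par : V → V := fun v => if h : v = r then r else (hex v h).choose with hpardef
  have hpar_spec : ∀ v, v ≠ r → T.Adj v (par v) ∧ T.dist (par v) r + 1 = T.dist v r := by
    intro v hv
    rw [hpardef]
    simp only [dif_neg hv]
    exact (hex v hv).choose_spec
  have Hparr : par r = r := by rw [hpardef]; simp
  have hchar : ∀ a b : V, T.Adj a b ↔ ((par a = b ∧ a ≠ r) ∨ (par b = a ∧ b ≠ r)) := by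
    intro a b
    constructor
    · intro hadj
      have hne := StarTreeAux.dist_ne_of_adj hT r hadj
      have hab1 : T.dist a b = 1 := SimpleGraph.dist_eq_one_iff_adj.2 hadj
      have hba1 : T.dist b a = 1 := SimpleGraph.dist_eq_one_iff_adj.2 hadj.symm
      have hd1 : T.dist a r ≤ T.dist a b + T.dist b r := hT.isConnected.dist_triangle
      have hd2 : T.dist b r ≤ T.dist b a + T.dist a r := hT.isConnected.dist_triangle
      rcases lt_or_gt_of_ne hne with hlt | hlt
      · right
        have hbr : b ≠ r := by
          intro hbr
          rw [hbr, SimpleGraph.dist_self] at hlt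
          omega
        have hspec := hpar_spec b hbr
        exact ⟨StarTreeAux.parent_unique hT r hspec.1 hspec.2 hadj.symm (by omega), hbr⟩
      · left
        have har : a ≠ r := by
          intro har
          rw [har, SimpleGraph.dist_self] at hlt
          omega
        have hspec := hpar_spec a har
        exact ⟨StarTreeAux.parent_unique hT r hspec.1 hspec.2 hadj (by omega), har⟩
    · rintro (⟨hp, hne⟩ | ⟨hp, hne⟩)
      · rw [← hp]; exact (hpar_spec a hne).1
      · rw [← hp]; exact ((hpar_spec b hne).1).symm
  -- the neighbor sets
  set Cf : V → Finset V := fun p => Finset.univ.filter (fun z => par z = p ∧ z ≠ r) with hCfdef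
  have hnd : ∀ p : V, (T.neighborSet p).ncard = (Cf p).card + (if p = r then 0 else 1) := by
    intro p
    have hset : T.neighborSet p = ↑(Cf p ∪ (if p = r then ∅ else {par p})) := by
      ext z
      simp only [SimpleGraph.mem_neighborSet, Finset.coe_union, Set.mem_union, Finset.mem_coe,
        Finset.mem_filter, Finset.mem_univ, true_and, hCfdef]
      constructor
      · intro hadj
        rcases (hchar p z).1 hadj with ⟨h1, h2⟩ | ⟨h1, h2⟩
        · right
          rw [if_neg h2, ← h1]
          simp
        · left; exact ⟨h1, h2⟩
      · intro h
        rcases h with h | h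
        · exact (hchar p z).2 (Or.inr ⟨h.1, h.2⟩)
        · split_ifs at h with hpr
          · exact absurd h (by simp)
          · have h' : z = par p := by simpa using h
            subst h'
            exact (hpar_spec p hpr).1
    rw [hset, Set.ncard_coe_finset, Finset.card_union_of_disjoint]
    · congr 1
      split_ifs <;> simp
    · split_ifs with hpr
      · simp
      · rw [Finset.disjoint_singleton_right]
        intro hmem
        rw [Finset.mem_filter] at hmem
        obtain ⟨-, h1, h2⟩ := hmem
        have hs1 := (hpar_spec p hpr).2
        have hs2 := (hpar_spec (par p) h2).2
        rw [h1] at hs2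
        omega
  -- the setup
  set S : StarTreeAux.Setup V := {
    par := par
    r := r
    ι := fun v => ((Fintype.equivFin V) v : ℕ)
    Δ := Δ
    dp := fun v => T.dist v r
    Hparr := Hparr
    Hdp := fun v hv => (hpar_spec v hv).2
    hι := fun a b h => (Fintype.equivFin V).injective (Fin.val_injective h)
    HΔ := hΔpos
    Hdeg := by
      intro p
      have h2 := hΔle p
      rw [hnd p] at h2
      exact h2 } with hSdef
  have hCmem : ∀ a b : V, par b = a → b ≠ r → b ∈ S.C a := by
    intro a b h1 h2
    exact S.mem_C.2 ⟨h1, h2⟩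
  -- the coloring
  set f : V → V → ℕ := fun a b =>
    if par b = a ∧ b ≠ r then S.assign a b
    else if par a = b ∧ a ≠ r then S.assign b a else 0 with hfdef
  have hboth : ∀ a b : V, par b = a ∧ b ≠ r → par a = b ∧ a ≠ r → False := by
    rintro a b ⟨h1, h2⟩ ⟨h3, h4⟩
    have d1 := (hpar_spec b h2).2
    have d2 := (hpar_spec a h4).2
    rw [h1] at d1
    rw [h3] at d2
    omega
  have hfcomm : ∀ a b, f a b = f b a := by
    intro a b
    simp only [hfdef]
    by_cases h1 : par b = a ∧ b ≠ r <;> by_cases h2 : par a = b ∧ a ≠ r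
    · exact absurd h2 (fun hh => hboth a b h1 hh)
    · rw [if_pos h1, if_neg h2, if_pos h1]
    · rw [if_neg h1, if_pos h2, if_pos h2]
    · rw [if_neg h1, if_neg h2, if_neg h2, if_neg h1]
  set c : Sym2 V → ℕ := Sym2.lift ⟨f, hfcomm⟩ with hcdef
  have hceval : ∀ a b : V, par b = a → b ≠ r → c s(a, b) = S.assign a b := by
    intro a b h1 h2
    rw [hcdef, Sym2.lift_mk]
    simp only [hfdef]
    exact if_pos ⟨h1, h2⟩
  have hceval' : ∀ a b : V, par b = a → b ≠ r → c s(b, a) = S.assign a b := by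
    intro a b h1 h2
    rw [Sym2.eq_swap]
    exact hceval a b h1 h2
  -- bounds
  have hbounds : ∀ e ∈ T.edgeSet, 1 ≤ c e ∧ c e ≤ 3 * Δ / 2 := by
    intro e he
    induction e with
    | _ a b =>
      have hadj : T.Adj a b := he
      rcases (hchar a b).1 hadj with ⟨h1, h2⟩ | ⟨h1, h2⟩
      · have hc1 : c s(a, b) = S.assign b a := hceval' b a h1 h2
        rw [hc1]
        have hin := (S.good_all b).mem_Icc a (hCmem b a h1 h2)
        rw [Finset.mem_Icc] at hin
        exact hin
      · have hc1 : c s(a, b) = S.assign a b := hceval a b h1 h2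
        rw [hc1]
        have hin := (S.good_all a).mem_Icc b (hCmem a b h1 h2)
        rw [Finset.mem_Icc] at hin
        exact hin
  -- properness
  have hproper : ∀ e₁ ∈ T.edgeSet, ∀ e₂ ∈ T.edgeSet, e₁ ≠ e₂ →
      (∃ x, x ∈ e₁ ∧ x ∈ e₂) → c e₁ ≠ c e₂ := by
    intro e1 he1 e2 he2 hne hshare
    obtain ⟨x, hx1, hx2⟩ := hshare
    have he1' : e1 = s(x, Sym2.Mem.other hx1) := (Sym2.other_spec hx1).symm
    have he2' : e2 = s(x, Sym2.Mem.other hx2) := (Sym2.other_spec hx2).symm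
    set y1 := Sym2.Mem.other hx1
    set y2 := Sym2.Mem.other hx2
    have hadj1 : T.Adj x y1 := by rw [he1'] at he1; exact he1
    have hadj2 : T.Adj x y2 := by rw [he2'] at he2; exact he2
    have hyne : y1 ≠ y2 := by
      intro h
      apply hne
      rw [he1', he2', h]
    rw [he1', he2']
    rcases (hchar x y1).1 hadj1 with ⟨hp1, hr1⟩ | ⟨hp1, hr1⟩ <;>
      rcases (hchar x y2).1 hadj2 with ⟨hp2, hr2⟩ | ⟨hp2, hr2⟩
    · exact absurd (hp1.symm.trans hp2) hyne
    · -- y1 parent of x, y2 child of x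
      rw [hceval' y1 x hp1 hr1, hceval x y2 hp2 hr2]
      intro heq
      have hne2 := (S.good_all x).ne_par hr1 y2 (hCmem x y2 hp2 hr2)
      have hpx : S.par x = y1 := hp1
      rw [hpx] at hne2
      exact hne2 heq.symm
    · rw [hceval x y1 hp1 hr1, hceval' y2 x hp2 hr2]
      intro heq
      have hne2 := (S.good_all x).ne_par hr2 y1 (hCmem x y1 hp1 hr1)
      have hpx : S.par x = y2 := hp2
      rw [hpx] at hne2
      exact hne2 heq
    · rw [hceval x y1 hp1 hr1, hceval x y2 hp2 hr2]
      intro heq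
      exact hyne ((S.good_all x).inj y1 (hCmem x y1 hp1 hr1) y2 (hCmem x y2 hp2 hr2) heq)
  refine ⟨c, hbounds, ⟨hproper, ?_, ?_⟩, ?_⟩
  · -- 4-paths
    intro w hinj hadjs
    have h0 : T.Adj (w 0) (w 1) := hadjs 0
    have h1 : T.Adj (w 1) (w 2) := hadjs 1
    have h2 : T.Adj (w 2) (w 3) := hadjs 2
    have h3 : T.Adj (w 3) (w 4) := hadjs 3
    have hne_ij : ∀ i j : Fin 5, i ≠ j → w i ≠ w j := fun i j h => hinj.ne h
    have hedge : ∀ a b : V, T.Adj a b → s(a, b) ∈ T.edgeSet := fun a b h => h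
    have hene : ∀ a b d : V, a ≠ d → s(a, b) ≠ s(b, d) := by
      intro a b d hne h
      rw [Sym2.eq_iff] at h
      rcases h with ⟨rfl, rfl⟩ | ⟨rfl, -⟩
      · exact hne rfl
      · exact hne rfl
    have h01 : c s(w 0, w 1) ≠ c s(w 1, w 2) :=
      hproper _ (hedge _ _ h0) _ (hedge _ _ h1) (hene _ _ _ (hne_ij 0 2 (by decide)))
        ⟨w 1, by simp, by simp⟩
    have h12 : c s(w 1, w 2) ≠ c s(w 2, w 3) :=
      hproper _ (hedge _ _ h1) _ (hedge _ _ h2) (hene _ _ _ (hne_ij 1 3 (by decide)))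
        ⟨w 2, by simp, by simp⟩
    have h23 : c s(w 2, w 3) ≠ c s(w 3, w 4) :=
      hproper _ (hedge _ _ h2) _ (hedge _ _ h3) (hene _ _ _ (hne_ij 2 4 (by decide)))
        ⟨w 3, by simp, by simp⟩
    have hno : ¬ (c s(w 0, w 1) = c s(w 2, w 3) ∧ c s(w 1, w 2) = c s(w 3, w 4)) := by
      rcases (hchar (w 0) (w 1)).1 h0 with ⟨u0, u0r⟩ | ⟨d0, d0r⟩ <;>
        rcases (hchar (w 1) (w 2)).1 h1 with ⟨u1, u1r⟩ | ⟨d1, d1r⟩ <;>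
        rcases (hchar (w 2) (w 3)).1 h2 with ⟨u2, u2r⟩ | ⟨d2, d2r⟩ <;>
        rcases (hchar (w 3) (w 4)).1 h3 with ⟨u3, u3r⟩ | ⟨d3, d3r⟩
      -- uuuu
      · rw [hceval' (w 1) (w 0) u0 u0r, hceval' (w 2) (w 1) u1 u1r,
          hceval' (w 3) (w 2) u2 u2r, hceval' (w 4) (w 3) u3 u3r]
        intro ⟨ha, hb⟩
        exact S.star_mono u0 u1 u2 u3 (hne_ij 0 1 (by decide)) (hne_ij 1 2 (by decide))
          (hne_ij 2 3 (by decide)) (hne_ij 3 4 (by decide)) ⟨ha.symm, hb.symm⟩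
      -- uuud
      · rw [hceval' (w 1) (w 0) u0 u0r, hceval' (w 2) (w 1) u1 u1r,
          hceval' (w 3) (w 2) u2 u2r, hceval (w 3) (w 4) d3 d3r]
        intro ⟨ha, hb⟩
        exact S.star_apex1 d3 u2 u1 u0 (hne_ij 4 3 (by decide)) (hne_ij 2 3 (by decide))
          (hne_ij 1 2 (by decide)) (hne_ij 0 1 (by decide)) ⟨hb, ha⟩
      -- uudu : invalid (d2 then u3)
      · exact absurd (d2.symm.trans u3) (hne_ij 2 4 (by decide))
      -- uudd
      · rw [hceval' (w 1) (w 0) u0 u0r, hceval' (w 2) (w 1) u1 u1r,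
          hceval (w 2) (w 3) d2 d2r, hceval (w 3) (w 4) d3 d3r]
        intro ⟨ha, hb⟩
        exact S.star_apex2 u0 u1 d2 d3 (hne_ij 0 1 (by decide)) (hne_ij 1 2 (by decide))
          (hne_ij 3 2 (by decide)) (hne_ij 4 3 (by decide)) (hne_ij 1 3 (by decide)) ⟨ha, hb⟩
      -- uduu : invalid (d1 then u2)
      · exact absurd (d1.symm.trans u2) (hne_ij 1 3 (by decide))
      -- udud : invalid
      · exact absurd (d1.symm.trans u2) (hne_ij 1 3 (by decide))
      -- uddu : invalid (d2 then u3)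
      · exact absurd (d2.symm.trans u3) (hne_ij 2 4 (by decide))
      -- uddd : apex1 direct
      · rw [hceval' (w 1) (w 0) u0 u0r, hceval (w 1) (w 2) d1 d1r,
          hceval (w 2) (w 3) d2 d2r, hceval (w 3) (w 4) d3 d3r]
        intro ⟨ha, hb⟩
        exact S.star_apex1 u0 d1 d2 d3 (hne_ij 0 1 (by decide)) (hne_ij 2 1 (by decide))
          (hne_ij 3 2 (by decide)) (hne_ij 4 3 (by decide)) ⟨ha.symm, hb.symm⟩
      -- duuu : invalid (d0 then u1)
      · exact absurd (d0.symm.trans u1) (hne_ij 0 2 (by decide))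
      -- duud : invalid
      · exact absurd (d0.symm.trans u1) (hne_ij 0 2 (by decide))
      -- dudu : invalid
      · exact absurd (d0.symm.trans u1) (hne_ij 0 2 (by decide))
      -- dudd : invalid
      · exact absurd (d0.symm.trans u1) (hne_ij 0 2 (by decide))
      -- dduu : invalid (d1 then u2)
      · exact absurd (d1.symm.trans u2) (hne_ij 1 3 (by decide))
      -- ddud : invalid
      · exact absurd (d1.symm.trans u2) (hne_ij 1 3 (by decide))
      -- dddu : invalid (d2 then u3)
      · exact absurd (d2.symm.trans u3) (hne_ij 2 4 (by decide))
      -- dddd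
      · rw [hceval (w 0) (w 1) d0 d0r, hceval (w 1) (w 2) d1 d1r,
          hceval (w 2) (w 3) d2 d2r, hceval (w 3) (w 4) d3 d3r]
        intro ⟨ha, hb⟩
        exact S.star_mono d3 d2 d1 d0 (hne_ij 4 3 (by decide)) (hne_ij 3 2 (by decide))
          (hne_ij 2 1 (by decide)) (hne_ij 1 0 (by decide)) ⟨hb, ha⟩
    exact StarTreeAux.three_le_card_image h01 h12 h23 hno
  · -- 4-cycles: impossible in a tree
    intro w hinj hadjs
    exfalso
    obtain ⟨i, hi⟩ : ∃ i : Fin 4, ∀ j : Fin 4, T.dist (w j) r ≤ T.dist (w i) r := by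
      obtain ⟨i, -, hi⟩ := Finset.exists_max_image Finset.univ (fun j => T.dist (w j) r)
        ⟨0, Finset.mem_univ 0⟩
      exact ⟨i, fun j => hi j (Finset.mem_univ j)⟩
    have hadj1 : T.Adj (w i) (w (i + 1)) := hadjs i
    have hadj0 : T.Adj (w (i - 1)) (w i) := by
      have := hadjs (i - 1)
      rwa [sub_add_cancel] at this
    have key : ∀ j, T.Adj (w i) (w j) → w j = par (w i) := by
      intro j hadj
      rcases (hchar (w i) (w j)).1 hadj with ⟨hh1, hh2⟩ | ⟨hh1, hh2⟩
      · exact hh1.symm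
      · exfalso
        have hd := (hpar_spec (w j) hh2).2
        rw [hh1] at hd
        have := hi j
        omega
    have k1 := key (i + 1) hadj1
    have k0 := key (i - 1) hadj0.symm
    have heq : w (i + 1) = w (i - 1) := by rw [k1, k0]
    exact (by decide : ∀ i : Fin 4, i + 1 ≠ i - 1) i (hinj heq)
  · -- the counting property
    intro v p hvr hdeg1 hadj hdist
    have hpv : par v = p := by
      have hspec := hpar_spec v hvr
      exact StarTreeAux.parent_unique hT r hspec.1 hspec.2 hadj hdist
    set W := (S.C v).filter (fun z => S.m v ≤ S.pos z) with hWdef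
    have hWcard : W.card = S.k v - S.m v := S.card_newdes v
    have hksub : (W : Set V) ⊆ {w | T.Adj v w ∧ T.dist w r = T.dist v r + 1 ∧
        ∀ u : V, T.Adj p u → c s(p, u) ≠ c s(v, w)} := by
      intro z hz
      rw [Finset.mem_coe, hWdef, Finset.mem_filter] at hz
      obtain ⟨hzC, hzm⟩ := hz
      obtain ⟨hzpar, hzr⟩ := S.mem_C.1 hzC
      have hzpar' : par z = v := hzpar
      refine ⟨(hchar v z).2 (Or.inr ⟨hzpar', hzr⟩), ?_, ?_⟩
      · have := (hpar_spec z hzr).2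
        rw [hzpar'] at this
        omega
      · intro u hu heq
        have hfresh := (S.good_all v).fresh hvr z hzC hzm
        have hpv' : S.par v = p := hpv
        rw [hpv'] at hfresh
        apply hfresh
        rw [← hceval v z hzpar' hzr, ← heq]
        rcases (hchar p u).1 hu with ⟨hh1, hh2⟩ | ⟨hh1, hh2⟩
        · -- u is the parent of p
          rw [hceval' u p hh1 hh2]
          have := S.mem_colorsAt_par (g := p) hh2
          rw [show S.par p = u from hh1] at this
          exact this
        · rw [hceval p u hh1 hh2]
          exact S.mem_colorsAt_child (hCmem p u hh1 hh2)
    have hle1 : W.card ≤ ({w | T.Adj v w ∧ T.dist w r = T.dist v r + 1 ∧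
        ∀ u : V, T.Adj p u → c s(p, u) ≠ c s(v, w)}).ncard := by
      rw [← Set.ncard_coe_finset]
      exact Set.ncard_le_ncard hksub (Set.toFinite _)
    refine le_trans ?_ hle1
    have hCfC : (Cf v).card = S.k v := by
      have hCeq : Cf v = S.C v := by
        ext z
        simp only [hCfdef, Finset.mem_filter, Finset.mem_univ, true_and]
        constructor
        · intro hz
          exact S.mem_C.2 ⟨hz.1, hz.2⟩
        · intro hz
          obtain ⟨hh1, hh2⟩ := S.mem_C.1 hz
          exact ⟨hh1, hh2⟩
      rw [hCeq]
      rfl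
    have hndv := hnd v
    rw [if_neg hvr, hCfC] at hndv
    have havail2 : Δ / 2 ≤ S.avail v := by
      have hav : S.avail v = S.L - S.deg (S.par v) := by
        show (if v = r then S.L else S.L - S.deg (S.par v)) = _
        rw [if_neg hvr]
      have hdegle : S.deg (S.par v) ≤ Δ := S.deg_le (S.par v)
      have hLeq : S.L = 3 * Δ / 2 := rfl
      omega
    have hmm : S.m v = S.k v - S.avail v := rfl
    have h2 : S.k v - S.m v = min (S.k v) (S.avail v) := by
      rw [hmm, Nat.sub_sub_eq_min]
    rw [hWcard, h2]
    have h3 : (T.neighborSet v).ncard - 1 = S.k v := by omega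
    rw [h3]
    exact min_le_min le_rfl havail2
end
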